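/- arXiv:2103.15882 — 6 statements merged into one kernel-verified Lean document; each statement's English description precedes it below -/
import Mathlib

section
/- Let N ≥ 1, M ≥ 1, L ≥ 0 be integers with L < 2M, let τ₀ > 0, C > 0 and κ₀ ≠ 0, and let a : [τ₀,∞) → (2×2 real matrices) satisfy |tr a(τ)| ≤ C τ^{−M/N} and |det a(τ) + κ₀ τ^{−L/N}| ≤ C τ^{−(L+1)/N} for all τ ≥ τ₀. Then: (i) if κ₀ > 0, there exists τ_* ≥ τ₀ such that for every τ ≥ τ_* the characteristic polynomial of a(τ) has two distinct real roots e₋(τ) < 0 < e₊(τ), and τ^{L/(2N)} e₊(τ) → √κ₀ and τ^{L/(2N)} e₋(τ) → −√κ₀ as τ → ∞; (ii) if κ₀ < 0, there exists τ_* ≥ τ₀ such that for every τ ≥ τ_* the eigenvalues of a(τ) form a pair of non-real complex conjugate numbers e_±(τ) with Re e_±(τ) = tr a(τ)/2 (hence |Re e_±(τ)| ≤ (C/2) τ^{−M/N}) and τ^{L/(2N)} |Im e_±(τ)| → √(−κ₀) as τ → ∞. -/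
open Real Filter

private lemma aux0 (c e : ℝ) (he : e < 0) :
    Tendsto (fun τ : ℝ => c * τ ^ e) atTop (nhds 0) := by
  have h := tendsto_rpow_neg_atTop (show 0 < -e by linarith)
  rw [neg_neg] at h
  simpa using h.const_mul c

private lemma aux1 {f : ℝ → ℝ} {c e : ℝ} (he : e < 0)
    (h : ∀ᶠ τ in atTop, |f τ| ≤ c * τ ^ e) : Tendsto f atTop (nhds 0) :=
  squeeze_zero_norm' (by simpa using h) (aux0 c e he)

private lemma aux_sqrt_rpow {τ : ℝ} (hτ : 0 < τ) {x y : ℝ} (hxy : y + y = x) :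
    Real.sqrt (τ ^ x) = τ ^ y := by
  rw [show τ ^ x = (τ ^ y) ^ 2 by rw [sq, ← Real.rpow_add hτ, hxy]]
  exact Real.sqrt_sq (Real.rpow_nonneg hτ.le y)

/-- Asymptotic eigenvalue analysis of the linearization matrix `a(τ)` with
`tr a(τ) = O(τ^{−M/N})` and `det a(τ) = −κ₀ τ^{−L/N} + O(τ^{−(L+1)/N})`.
(Recall that the characteristic polynomial of a `2×2` matrix is `x² − tr·x + det`.)
(i) If `κ₀ > 0`, eventually the characteristic polynomial has exactly two distinct real
roots `e₋(τ) < 0 < e₊(τ)` with `τ^{L/(2N)} e₊(τ) → √κ₀`, `τ^{L/(2N)} e₋(τ) → −√κ₀`.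
(ii) If `κ₀ < 0`, eventually the eigenvalues form a non-real complex conjugate pair `e±(τ)`
with `Re e±(τ) = tr a(τ)/2` (hence `|Re e±(τ)| ≤ (C/2) τ^{−M/N}`) and
`τ^{L/(2N)} |Im e±(τ)| → √(−κ₀)`. -/
theorem statement5 (N M L : ℕ) (hN : 1 ≤ N) (hM : 1 ≤ M) (hL : L < 2 * M)
    (τ₀ C κ₀ : ℝ) (hτ₀ : 0 < τ₀) (hC : 0 < C) (hκ₀ : κ₀ ≠ 0)
    (a : ℝ → Matrix (Fin 2) (Fin 2) ℝ)
    (htr : ∀ τ ≥ τ₀, |Matrix.trace (a τ)| ≤ C * τ ^ (-(M : ℝ) / (N : ℝ)))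
    (hdet : ∀ τ ≥ τ₀, |(a τ).det + κ₀ * τ ^ (-(L : ℝ) / (N : ℝ))| ≤
      C * τ ^ (-((L : ℝ) + 1) / (N : ℝ))) :
    (0 < κ₀ → ∃ τs ≥ τ₀, ∃ em ep : ℝ → ℝ,
      (∀ τ ≥ τs,
        em τ < 0 ∧ 0 < ep τ ∧
        (em τ) ^ 2 - Matrix.trace (a τ) * em τ + (a τ).det = 0 ∧
        (ep τ) ^ 2 - Matrix.trace (a τ) * ep τ + (a τ).det = 0 ∧
        (∀ x : ℝ, x ^ 2 - Matrix.trace (a τ) * x + (a τ).det = 0 → x = em τ ∨ x = ep τ)) ∧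
      Filter.Tendsto (fun τ => τ ^ ((L : ℝ) / (2 * (N : ℝ))) * ep τ)
        Filter.atTop (nhds (Real.sqrt κ₀)) ∧
      Filter.Tendsto (fun τ => τ ^ ((L : ℝ) / (2 * (N : ℝ))) * em τ)
        Filter.atTop (nhds (-Real.sqrt κ₀))) ∧
    (κ₀ < 0 → ∃ τs ≥ τ₀, ∃ e : ℝ → ℂ,
      (∀ τ ≥ τs,
        (e τ) ^ 2 - (↑(Matrix.trace (a τ)) : ℂ) * e τ + (↑((a τ).det) : ℂ) = 0 ∧
        (e τ).im ≠ 0 ∧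
        (e τ).re = Matrix.trace (a τ) / 2 ∧
        |(e τ).re| ≤ (C / 2) * τ ^ (-(M : ℝ) / (N : ℝ))) ∧
      Filter.Tendsto (fun τ => τ ^ ((L : ℝ) / (2 * (N : ℝ))) * |(e τ).im|)
        Filter.atTop (nhds (Real.sqrt (-κ₀)))) := by
  have hN0 : (0:ℝ) < N := by exact_mod_cast hN
  have hL2M : (L:ℝ) < 2 * M := by exact_mod_cast hL
  set α : ℝ := (L:ℝ) / N with hαdef
  set β : ℝ := (L:ℝ) / (2 * N) with hβdef
  have hββ : β + β = α := by rw [hαdef, hβdef]; field_simp; ring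
  set tr : ℝ → ℝ := fun τ => Matrix.trace (a τ) with htrdef
  set d : ℝ → ℝ := fun τ => (a τ).det with hddef
  have hev : ∀ᶠ τ : ℝ in atTop, τ₀ ≤ τ ∧ 1 ≤ τ :=
    (eventually_ge_atTop τ₀).and (eventually_ge_atTop 1)
  -- F1 : τ^α · det → -κ₀
  have F1 : Tendsto (fun τ => τ ^ α * d τ) atTop (nhds (-κ₀)) := by
    have h0 : Tendsto (fun τ => τ ^ α * d τ + κ₀) atTop (nhds 0) := by
      apply aux1 (show -(1:ℝ)/N < 0 from div_neg_of_neg_of_pos (by norm_num) hN0)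
      filter_upwards [hev] with τ ⟨h1, h2⟩
      have hτ : 0 < τ := lt_of_lt_of_le one_pos h2
      have hb := hdet τ h1
      have e1 : τ ^ α * (κ₀ * τ ^ (-(L:ℝ)/N)) = κ₀ := by
        rw [mul_comm κ₀, ← mul_assoc, ← Real.rpow_add hτ,
          show α + -(L:ℝ)/N = 0 by rw [hαdef]; ring, Real.rpow_zero, one_mul]
      have e2 : τ ^ α * (C * τ ^ (-((L:ℝ)+1)/N)) = C * τ ^ (-(1:ℝ)/N) := by
        rw [mul_comm C, ← mul_assoc, ← Real.rpow_add hτ, mul_comm,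
          show α + -((L:ℝ)+1)/N = -(1:ℝ)/N by rw [hαdef]; field_simp; ring]
      have e3 : τ ^ α * d τ + κ₀ = τ ^ α * (d τ + κ₀ * τ ^ (-(L:ℝ)/N)) := by
        rw [mul_add, e1]
      rw [e3, abs_mul, abs_of_pos (Real.rpow_pos_of_pos hτ _), ← e2]
      exact mul_le_mul_of_nonneg_left hb (Real.rpow_nonneg hτ.le _)
    have := h0.sub_const κ₀
    simpa using this
  -- F2 : τ^β · tr → 0
  have F2 : Tendsto (fun τ => τ ^ β * tr τ) atTop (nhds 0) := by
    apply aux1 (c := C) (e := β + -(M:ℝ)/N)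
    · rw [show β + -(M:ℝ)/N = ((L:ℝ) - 2*M)/(2*N) by rw [hβdef]; field_simp; ring]
      apply div_neg_of_neg_of_pos (by linarith) (by positivity)
    · filter_upwards [hev] with τ ⟨h1, h2⟩
      have hτ : 0 < τ := lt_of_lt_of_le one_pos h2
      rw [abs_mul, abs_of_pos (Real.rpow_pos_of_pos hτ _), Real.rpow_add hτ,
        mul_comm C, mul_assoc, mul_comm _ C]
      exact mul_le_mul_of_nonneg_left (htr τ h1) (Real.rpow_nonneg hτ.le _)
  -- F3 : τ^α · (tr² - 4 det) → 4 κ₀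
  have F3 : Tendsto (fun τ => τ ^ α * ((tr τ)^2 - 4 * d τ)) atTop (nhds (4 * κ₀)) := by
    have Ft2 : Tendsto (fun τ => τ ^ α * (tr τ)^2) atTop (nhds 0) := by
      have h := F2.mul F2
      rw [mul_zero] at h
      apply h.congr'
      filter_upwards [hev] with τ ⟨h1, h2⟩
      have hτ : 0 < τ := lt_of_lt_of_le one_pos h2
      rw [show τ ^ β * tr τ * (τ ^ β * tr τ) = (τ ^ β * τ ^ β) * (tr τ)^2 by ring,
        ← Real.rpow_add hτ, hββ]
    have h := Ft2.sub (F1.const_mul 4)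
    rw [show (0:ℝ) - 4 * -κ₀ = 4 * κ₀ by ring] at h
    exact h.congr (fun τ => by ring)
  constructor
  · -- case κ₀ > 0
    intro hpos
    have hd_ev : ∀ᶠ τ : ℝ in atTop, d τ < 0 := by
      have h1 : ∀ᶠ τ : ℝ in atTop, τ ^ α * d τ < 0 :=
        F1.eventually_lt_const (by linarith)
      filter_upwards [h1, eventually_ge_atTop (1:ℝ)] with τ h h2
      have hτα : 0 < τ ^ α := Real.rpow_pos_of_pos (lt_of_lt_of_le one_pos h2) _
      nlinarith
    have hΔ_ev : ∀ᶠ τ : ℝ in atTop, 0 < (tr τ)^2 - 4 * d τ := by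
      have h1 : ∀ᶠ τ : ℝ in atTop, 0 < τ ^ α * ((tr τ)^2 - 4 * d τ) :=
        F3.eventually_const_lt (by linarith)
      filter_upwards [h1, eventually_ge_atTop (1:ℝ)] with τ h h2
      have hτα : 0 < τ ^ α := Real.rpow_pos_of_pos (lt_of_lt_of_le one_pos h2) _
      nlinarith
    obtain ⟨A, hA⟩ := eventually_atTop.mp (hd_ev.and hΔ_ev)
    refine ⟨max (max A 1) τ₀, le_max_right _ _,
      fun τ => (tr τ - Real.sqrt ((tr τ)^2 - 4 * d τ)) / 2,
      fun τ => (tr τ + Real.sqrt ((tr τ)^2 - 4 * d τ)) / 2, ?_, ?_, ?_⟩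
    · intro τ hτs
      obtain ⟨hdneg, hΔpos⟩ := hA τ (le_trans (le_max_left A 1) (le_trans (le_max_left _ _) hτs))
      set s := Real.sqrt ((tr τ)^2 - 4 * d τ) with hsdef
      have hs2 : s ^ 2 = (tr τ)^2 - 4 * d τ := Real.sq_sqrt hΔpos.le
      have habs : |tr τ| < s := by
        rw [← Real.sqrt_sq_eq_abs]
        exact Real.sqrt_lt_sqrt (sq_nonneg _) (by linarith)
      obtain ⟨hl, hr⟩ := abs_lt.mp habs
      refine ⟨by linarith, by linarith, by linear_combination hs2 / 4,
        by linear_combination hs2 / 4, ?_⟩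
      intro x hx
      have hfact : (x - (tr τ - s) / 2) * (x - (tr τ + s) / 2) = 0 := by
        linear_combination hx - hs2 / 4
      rcases mul_eq_zero.mp hfact with h | h
      · left; linarith
      · right; linarith
    · -- ep limit
      have hEq : (fun τ => τ ^ β * tr τ / 2 + Real.sqrt (τ ^ α * ((tr τ)^2 - 4 * d τ)) / 2)
          =ᶠ[atTop] (fun τ => τ ^ β * ((tr τ + Real.sqrt ((tr τ)^2 - 4 * d τ)) / 2)) := by
        filter_upwards [eventually_ge_atTop (1:ℝ)] with τ h2
        have hτ : 0 < τ := lt_of_lt_of_le one_pos h2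
        rw [Real.sqrt_mul (Real.rpow_nonneg hτ.le _), aux_sqrt_rpow hτ hββ]
        ring
      have t1 := (F2.div_const 2).add
        (((Real.continuous_sqrt.tendsto _).comp F3).div_const 2)
      rw [show (0:ℝ)/2 + Real.sqrt (4*κ₀)/2 = Real.sqrt κ₀ by
        rw [show (4:ℝ)*κ₀ = 2^2*κ₀ by ring, Real.sqrt_mul (by positivity),
          Real.sqrt_sq (by norm_num)]; ring] at t1
      exact t1.congr' hEq
    · -- em limit
      have hEq : (fun τ => τ ^ β * tr τ / 2 - Real.sqrt (τ ^ α * ((tr τ)^2 - 4 * d τ)) / 2)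
          =ᶠ[atTop] (fun τ => τ ^ β * ((tr τ - Real.sqrt ((tr τ)^2 - 4 * d τ)) / 2)) := by
        filter_upwards [eventually_ge_atTop (1:ℝ)] with τ h2
        have hτ : 0 < τ := lt_of_lt_of_le one_pos h2
        rw [Real.sqrt_mul (Real.rpow_nonneg hτ.le _), aux_sqrt_rpow hτ hββ]
        ring
      have t1 := (F2.div_const 2).sub
        (((Real.continuous_sqrt.tendsto _).comp F3).div_const 2)
      rw [show (0:ℝ)/2 - Real.sqrt (4*κ₀)/2 = -Real.sqrt κ₀ by
        rw [show (4:ℝ)*κ₀ = 2^2*κ₀ by ring, Real.sqrt_mul (by positivity),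
          Real.sqrt_sq (by norm_num)]; ring] at t1
      exact t1.congr' hEq
  · -- case κ₀ < 0
    intro hneg
    have hΔ_ev : ∀ᶠ τ : ℝ in atTop, 0 < 4 * d τ - (tr τ)^2 := by
      have h1 : ∀ᶠ τ : ℝ in atTop, τ ^ α * ((tr τ)^2 - 4 * d τ) < 0 :=
        F3.eventually_lt_const (by linarith)
      filter_upwards [h1, eventually_ge_atTop (1:ℝ)] with τ h h2
      have hτα : 0 < τ ^ α := Real.rpow_pos_of_pos (lt_of_lt_of_le one_pos h2) _
      nlinarith
    obtain ⟨A, hA⟩ := eventually_atTop.mp hΔ_ev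
    refine ⟨max (max A 1) τ₀, le_max_right _ _,
      fun τ => (↑(tr τ / 2) : ℂ) + ↑(Real.sqrt (4 * d τ - (tr τ)^2) / 2) * Complex.I,
      ?_, ?_⟩
    · intro τ hτs
      have hτ0 : τ₀ ≤ τ := le_trans (le_max_right _ _) hτs
      have hΔpos := hA τ (le_trans (le_max_left A 1) (le_trans (le_max_left _ _) hτs))
      set u := Real.sqrt (4 * d τ - (tr τ)^2) with hudef
      have hu2 : u ^ 2 = 4 * d τ - (tr τ)^2 := Real.sq_sqrt hΔpos.le
      have hupos : 0 < u := Real.sqrt_pos.mpr hΔpos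
      have hre : ((↑(tr τ / 2) : ℂ) + ↑(u / 2) * Complex.I).re = tr τ / 2 := by simp
      have him : ((↑(tr τ / 2) : ℂ) + ↑(u / 2) * Complex.I).im = u / 2 := by simp
      refine ⟨?_, ?_, ?_, ?_⟩
      · have huC : ((u : ℝ) : ℂ) ^ 2 = 4 * (d τ : ℂ) - (tr τ : ℂ)^2 := by
          exact_mod_cast hu2
        push_cast
        linear_combination ((u:ℂ)^2/4) * Complex.I_sq + (-(1:ℂ)/4) * huC
      · rw [him]; positivity
      · exact hre
      · rw [hre, abs_div, abs_two]
        have := htr τ hτ0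
        linarith
    · -- Im limit
      have hEq : (fun τ => Real.sqrt (τ ^ α * (4 * d τ - (tr τ)^2)) / 2)
          =ᶠ[atTop] (fun τ => τ ^ β *
            |((↑(tr τ / 2) : ℂ) + ↑(Real.sqrt (4 * d τ - (tr τ)^2) / 2) * Complex.I).im|) := by
        filter_upwards [eventually_ge_atTop (1:ℝ)] with τ h2
        have hτ : 0 < τ := lt_of_lt_of_le one_pos h2
        have him : ((↑(tr τ / 2) : ℂ) +
            ↑(Real.sqrt (4 * d τ - (tr τ)^2) / 2) * Complex.I).im
            = Real.sqrt (4 * d τ - (tr τ)^2) / 2 := by simp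
        rw [him, abs_of_nonneg (by positivity),
          Real.sqrt_mul (Real.rpow_nonneg hτ.le _), aux_sqrt_rpow hτ hββ]
        ring
      have F3' : Tendsto (fun τ => τ ^ α * (4 * d τ - (tr τ)^2)) atTop (nhds (-(4*κ₀))) := by
        have h := F3.neg
        exact (h.congr (fun τ => by ring))
      have t1 := ((Real.continuous_sqrt.tendsto _).comp F3').div_const 2
      rw [show Real.sqrt (-(4*κ₀))/2 = Real.sqrt (-κ₀) by
        rw [show -((4:ℝ)*κ₀) = 2^2*(-κ₀) by ring, Real.sqrt_mul (by positivity),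
          Real.sqrt_sq (by norm_num)]; ring] at t1
      exact t1.congr' hEq
end

section
/- Let N, M, L, n be integers with N ≥ 1, M ≥ 1, 0 ≤ L ≤ N − M and n ≥ L. For each L ≤ K ≤ n let Λ_K : ℝ² → ℝ be continuous and 2π-periodic in its second argument, and for each 0 ≤ K ≤ n let Ω_K : ℝ² → ℝ be continuous and 2π-periodic in its second argument. Assume Λ_L(ρ,φ) ≠ 0 for all (ρ,φ) ∈ ℝ². Then every solution (ρ(τ), φ(τ)) defined on a half-line [τ₁,∞), τ₁ > 0, of the system dρ/dτ = Σ_{K=L}^{n} τ^{−(M+K)/N} Λ_K(ρ,φ), dφ/dτ = Σ_{K=0}^{n} τ^{−(M+K)/N} Ω_K(ρ,φ) exits every bounded set in finite time: for every bounded set D ⊂ ℝ² there exists τ₂ ≥ τ₁ with (ρ(τ₂), φ(τ₂)) ∉ D. -/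
open Real

lemma sign_const6 {f : ℝ × ℝ → ℝ} (hf : Continuous f) (h0 : ∀ p, f p ≠ 0) :
    (∀ p, 0 < f p) ∨ (∀ p, f p < 0) := by
  by_contra h
  push_neg at h
  obtain ⟨⟨p, hp⟩, ⟨q, hq⟩⟩ := h
  have hp' : f p < 0 := lt_of_le_of_ne hp (h0 p)
  have hq' : 0 < f q := lt_of_le_of_ne hq (Ne.symm (h0 q))
  have hg : Continuous fun t : ℝ => f (p + t • (q - p)) := by
    apply hf.comp
    continuity
  have e0 : p + (0:ℝ) • (q - p) = p := by simp
  have e1 : p + (1:ℝ) • (q - p) = q := by rw [one_smul]; abel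
  have h0m : (0:ℝ) ∈ Set.Icc (f (p + (0:ℝ) • (q - p))) (f (p + (1:ℝ) • (q - p))) := by
    rw [e0, e1]
    exact ⟨hp'.le, hq'.le⟩
  obtain ⟨t, _, ht⟩ := intermediate_value_Icc zero_le_one hg.continuousOn h0m
  exact h0 _ ht


/-- phase drifting: In the truncated averaged system
`dρ/dτ = Σ_{K=L}^{n} τ^{−(M+K)/N} Λ_K(ρ,φ)`, `dφ/dτ = Σ_{K=0}^{n} τ^{−(M+K)/N} Ω_K(ρ,φ)`,
with continuous `2π`-periodic-in-`φ` coefficients and a never-vanishing leading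
coefficient `Λ_L`, every solution on a half-line `[τ₁,∞)` with `τ₁ > 0` exits every
bounded subset of the plane in finite time. -/
theorem statement6 (N M L n : ℕ) (hN : 1 ≤ N) (hM : 1 ≤ M) (hL : M + L ≤ N) (hn : L ≤ n)
    (Λ Ω : ℕ → ℝ → ℝ → ℝ)
    (hΛc : ∀ K, L ≤ K → K ≤ n → Continuous (fun p : ℝ × ℝ => Λ K p.1 p.2))
    (hΛp : ∀ K, L ≤ K → K ≤ n → ∀ ρ φ : ℝ, Λ K ρ (φ + 2 * π) = Λ K ρ φ)
    (hΩc : ∀ K ≤ n, Continuous (fun p : ℝ × ℝ => Ω K p.1 p.2))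
    (hΩp : ∀ K ≤ n, ∀ ρ φ : ℝ, Ω K ρ (φ + 2 * π) = Ω K ρ φ)
    (hΛ0 : ∀ ρ φ : ℝ, Λ L ρ φ ≠ 0)
    (τ₁ : ℝ) (hτ₁ : 0 < τ₁) (ρ φ : ℝ → ℝ)
    (hρ : ∀ τ ≥ τ₁, HasDerivAt ρ
      (∑ K ∈ Finset.Icc L n, τ ^ (-(((M : ℝ) + (K : ℝ)) / (N : ℝ))) * Λ K (ρ τ) (φ τ)) τ)
    (hφ : ∀ τ ≥ τ₁, HasDerivAt φ
      (∑ K ∈ Finset.range (n + 1), τ ^ (-(((M : ℝ) + (K : ℝ)) / (N : ℝ))) * Ω K (ρ τ) (φ τ)) τ) :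
    ∀ D : Set (ℝ × ℝ), Bornology.IsBounded D → ∃ τ₂ ≥ τ₁, (ρ τ₂, φ τ₂) ∉ D := by
  intro D hD
  by_contra hcon
  push_neg at hcon
  -- bounding set
  obtain ⟨R₀, hR₀⟩ := hD.subset_closedBall (0 : ℝ × ℝ)
  set R : ℝ := max R₀ 0 with hRdef
  have hR0 : 0 ≤ R := le_max_right _ _
  set S : Set (ℝ × ℝ) := Metric.closedBall (0 : ℝ × ℝ) R with hSdef
  have hDS : D ⊆ S := hR₀.trans (Metric.closedBall_subset_closedBall (le_max_left _ _))
  have hmemS : ∀ τ, τ₁ ≤ τ → (ρ τ, φ τ) ∈ S := fun τ hτ => hDS (hcon τ hτ)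
  have hρR : ∀ τ, τ₁ ≤ τ → |ρ τ| ≤ R := by
    intro τ hτ
    have h := hmemS τ hτ
    rw [hSdef, Metric.mem_closedBall, dist_zero_right] at h
    calc |ρ τ| = ‖(ρ τ, φ τ).1‖ := (Real.norm_eq_abs _).symm
      _ ≤ ‖(ρ τ, φ τ)‖ := norm_fst_le _
      _ ≤ R := h
  -- constant sign of Λ L
  obtain ⟨ε, hε1, hεpos⟩ : ∃ ε : ℝ, (ε = 1 ∨ ε = -1) ∧ ∀ x y : ℝ, 0 < ε * Λ L x y := by
    rcases sign_const6 (hΛc L le_rfl hn) (fun p => hΛ0 p.1 p.2) with h | h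
    · exact ⟨1, Or.inl rfl, fun x y => by simpa using h (x, y)⟩
    · exact ⟨-1, Or.inr rfl, fun x y => by nlinarith [h (x, y)]⟩
  have hεabs : |ε| = 1 := by rcases hε1 with h | h <;> simp [h]
  -- minimum of ε * Λ L on S
  have hScpt : IsCompact S := isCompact_closedBall _ _
  have hSne : S.Nonempty := ⟨0, Metric.mem_closedBall_self hR0⟩
  obtain ⟨pm, hpmS, hpm⟩ := hScpt.exists_isMinOn hSne
    ((continuous_const.mul (hΛc L le_rfl hn)).continuousOn :
      ContinuousOn (fun p : ℝ × ℝ => ε * Λ L p.1 p.2) S)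
  set c : ℝ := ε * Λ L pm.1 pm.2 with hcdef
  have hc : 0 < c := hεpos _ _
  have hcle : ∀ p ∈ S, c ≤ ε * Λ L p.1 p.2 := fun p hp => hpm hp
  -- bound on the sum of |Λ K|
  have hsumc : Continuous fun p : ℝ × ℝ => ∑ K ∈ Finset.Icc L n, |Λ K p.1 p.2| := by
    apply continuous_finset_sum
    intro K hK
    exact (hΛc K (Finset.mem_Icc.mp hK).1 (Finset.mem_Icc.mp hK).2).abs
  obtain ⟨C, hC⟩ := hScpt.exists_bound_of_continuousOn hsumc.continuousOn
  set B : ℝ := C + 1 with hBdef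
  have hB : 0 < B := by
    have := le_trans (norm_nonneg _) (hC 0 (Metric.mem_closedBall_self hR0))
    linarith
  have hsumle : ∀ p ∈ S, ∑ K ∈ Finset.Icc L n, |Λ K p.1 p.2| ≤ B := by
    intro p hp
    have h := hC p hp
    rw [Real.norm_eq_abs] at h
    have h2 := le_trans (le_abs_self _) h
    linarith
  -- thresholds
  have hNpos : (0:ℝ) < N := by exact_mod_cast Nat.lt_of_lt_of_le Nat.zero_lt_one hN
  set s : ℝ := max (2 * B / c) 1 with hsdef
  have hs1 : (1:ℝ) ≤ s := le_max_right _ _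
  have hspos : (0:ℝ) < s := lt_of_lt_of_le one_pos hs1
  set T₀ : ℝ := max (max τ₁ 1) (s ^ N) with hT₀def
  have hT₀τ₁ : τ₁ ≤ T₀ := le_trans (le_max_left _ _) (le_max_left _ _)
  have hT₀1 : (1:ℝ) ≤ T₀ := le_trans (le_max_right τ₁ 1) (le_max_left _ _)
  have hT₀pos : (0:ℝ) < T₀ := lt_of_lt_of_le one_pos hT₀1
  have hT₀s : s ^ N ≤ T₀ := le_max_right _ _
  -- small inverse power
  have hinv : ∀ τ, T₀ ≤ τ → τ ^ (-(1 / (N:ℝ))) * B ≤ c / 2 := by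
    intro τ hτ
    have hτ1 : (1:ℝ) ≤ τ := le_trans hT₀1 hτ
    have hτpos : (0:ℝ) < τ := lt_of_lt_of_le one_pos hτ1
    have h1 : s ≤ τ ^ ((1:ℝ) / N) := by
      have hmono : (s ^ N : ℝ) ^ ((1:ℝ) / N) ≤ τ ^ ((1:ℝ) / N) :=
        Real.rpow_le_rpow (by positivity) (le_trans hT₀s hτ) (by positivity)
      have heq : (s ^ N : ℝ) ^ ((1:ℝ) / N) = s := by
        rw [← Real.rpow_natCast s N, ← Real.rpow_mul hspos.le]
        rw [show (N:ℝ) * (1 / N) = 1 by field_simp]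
        exact Real.rpow_one s
      rwa [heq] at hmono
    have htpow : (0:ℝ) < τ ^ ((1:ℝ) / N) := Real.rpow_pos_of_pos hτpos _
    have h2 : τ ^ (-(1 / (N:ℝ))) ≤ s⁻¹ := by
      rw [Real.rpow_neg hτpos.le]
      exact inv_anti₀ hspos h1
    have h3 : 2 * B / c ≤ s := le_max_left _ _
    have h4 : s⁻¹ ≤ c / (2 * B) := by
      have h5 := inv_anti₀ (by positivity : (0:ℝ) < 2 * B / c) h3
      rwa [inv_div] at h5
    calc τ ^ (-(1 / (N:ℝ))) * B ≤ c / (2 * B) * B :=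
        mul_le_mul_of_nonneg_right (h2.trans h4) hB.le
      _ = c / 2 := by field_simp
  -- key derivative lower bound
  have key : ∀ τ, T₀ ≤ τ →
      c / 2 * τ⁻¹ ≤ ε * ∑ K ∈ Finset.Icc L n,
        τ ^ (-(((M : ℝ) + (K : ℝ)) / (N : ℝ))) * Λ K (ρ τ) (φ τ) := by
    intro τ hτ
    have hτ1 : (1:ℝ) ≤ τ := le_trans hT₀1 hτ
    have hτpos : (0:ℝ) < τ := lt_of_lt_of_le one_pos hτ1
    have hmem : (ρ τ, φ τ) ∈ S := hmemS τ (le_trans hT₀τ₁ hτ)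
    set aL : ℝ := ((M:ℝ) + (L:ℝ)) / N with haLdef
    have haLpos : 0 ≤ aL := by positivity
    have haL1 : aL ≤ 1 := by
      rw [haLdef, div_le_one hNpos]
      have : ((M + L : ℕ) : ℝ) ≤ (N : ℕ) := by exact_mod_cast hL
      push_cast at this
      linarith
    have hpL : (0:ℝ) < τ ^ (-aL) := Real.rpow_pos_of_pos hτpos _
    have hLmem : L ∈ Finset.Icc L n := Finset.mem_Icc.mpr ⟨le_rfl, hn⟩
    rw [← Finset.add_sum_erase _ _ hLmem, mul_add]
    -- main term
    have hmain : τ ^ (-aL) * c ≤ ε * (τ ^ (-(((M : ℝ) + (L : ℝ)) / (N : ℝ))) * Λ L (ρ τ) (φ τ)) := by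
      have h := hcle _ hmem
      calc τ ^ (-aL) * c ≤ τ ^ (-aL) * (ε * Λ L (ρ τ) (φ τ)) :=
          mul_le_mul_of_nonneg_left h hpL.le
        _ = ε * (τ ^ (-(((M : ℝ) + (L : ℝ)) / (N : ℝ))) * Λ L (ρ τ) (φ τ)) := by
          rw [haLdef]; ring
    -- error term
    have herr : |ε * ∑ K ∈ (Finset.Icc L n).erase L,
        τ ^ (-(((M : ℝ) + (K : ℝ)) / (N : ℝ))) * Λ K (ρ τ) (φ τ)|
        ≤ τ ^ (-aL) * (τ ^ (-(1 / (N:ℝ))) * B) := by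
      rw [abs_mul, hεabs, one_mul]
      have hterm : ∀ K ∈ (Finset.Icc L n).erase L,
          |τ ^ (-(((M : ℝ) + (K : ℝ)) / (N : ℝ))) * Λ K (ρ τ) (φ τ)|
          ≤ τ ^ (-aL) * τ ^ (-(1 / (N:ℝ))) * |Λ K (ρ τ) (φ τ)| := by
        intro K hK
        have hKIcc := Finset.mem_of_mem_erase hK
        have hKne : K ≠ L := Finset.ne_of_mem_erase hK
        have hLK : L + 1 ≤ K := Nat.succ_le_of_lt
          (lt_of_le_of_ne (Finset.mem_Icc.mp hKIcc).1 (Ne.symm hKne))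
        have hexp : -(((M : ℝ) + (K : ℝ)) / (N : ℝ)) ≤ -aL + -(1 / (N:ℝ)) := by
          have hcast : ((L:ℝ) + 1) ≤ (K:ℝ) := by exact_mod_cast hLK
          have heq2 : -aL + -(1 / (N:ℝ)) = -(((M:ℝ) + (L:ℝ) + 1) / N) := by
            rw [haLdef]; ring
          rw [heq2]
          apply neg_le_neg
          exact (div_le_div_iff_of_pos_right hNpos).mpr (by linarith)
        have hple : τ ^ (-(((M : ℝ) + (K : ℝ)) / (N : ℝ))) ≤ τ ^ (-aL) * τ ^ (-(1 / (N:ℝ))) := by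
          rw [← Real.rpow_add hτpos]
          exact Real.rpow_le_rpow_of_exponent_le hτ1 hexp
        rw [abs_mul]
        have habs : |τ ^ (-(((M : ℝ) + (K : ℝ)) / (N : ℝ)))|
            = τ ^ (-(((M : ℝ) + (K : ℝ)) / (N : ℝ))) :=
          abs_of_pos (Real.rpow_pos_of_pos hτpos _)
        rw [habs]
        exact mul_le_mul_of_nonneg_right hple (abs_nonneg _)
      calc |∑ K ∈ (Finset.Icc L n).erase L,
          τ ^ (-(((M : ℝ) + (K : ℝ)) / (N : ℝ))) * Λ K (ρ τ) (φ τ)|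
          ≤ ∑ K ∈ (Finset.Icc L n).erase L,
            |τ ^ (-(((M : ℝ) + (K : ℝ)) / (N : ℝ))) * Λ K (ρ τ) (φ τ)| :=
          Finset.abs_sum_le_sum_abs _ _
        _ ≤ ∑ K ∈ (Finset.Icc L n).erase L,
            τ ^ (-aL) * τ ^ (-(1 / (N:ℝ))) * |Λ K (ρ τ) (φ τ)| :=
          Finset.sum_le_sum hterm
        _ = τ ^ (-aL) * τ ^ (-(1 / (N:ℝ))) * ∑ K ∈ (Finset.Icc L n).erase L,
            |Λ K (ρ τ) (φ τ)| := by rw [Finset.mul_sum]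
        _ ≤ τ ^ (-aL) * τ ^ (-(1 / (N:ℝ))) * ∑ K ∈ Finset.Icc L n, |Λ K (ρ τ) (φ τ)| := by
          apply mul_le_mul_of_nonneg_left
          · exact Finset.sum_le_sum_of_subset_of_nonneg (Finset.erase_subset _ _)
              (fun K hK _ => abs_nonneg _)
          · positivity
        _ ≤ τ ^ (-aL) * τ ^ (-(1 / (N:ℝ))) * B := by
          apply mul_le_mul_of_nonneg_left (hsumle _ hmem)
          positivity
        _ = τ ^ (-aL) * (τ ^ (-(1 / (N:ℝ))) * B) := by ring
    have hinvτ := hinv τ hτ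
    have hτinv : c / 2 * τ⁻¹ ≤ c / 2 * τ ^ (-aL) := by
      apply mul_le_mul_of_nonneg_left _ (by linarith : (0:ℝ) ≤ c / 2)
      rw [← Real.rpow_neg_one τ]
      exact Real.rpow_le_rpow_of_exponent_le hτ1 (by linarith)
    have herr' : -(τ ^ (-aL) * (c / 2)) ≤ ε * ∑ K ∈ (Finset.Icc L n).erase L,
        τ ^ (-(((M : ℝ) + (K : ℝ)) / (N : ℝ))) * Λ K (ρ τ) (φ τ) := by
      have h1 := neg_abs_le (ε * ∑ K ∈ (Finset.Icc L n).erase L,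
        τ ^ (-(((M : ℝ) + (K : ℝ)) / (N : ℝ))) * Λ K (ρ τ) (φ τ))
      have h2 : τ ^ (-aL) * (τ ^ (-(1 / (N:ℝ))) * B) ≤ τ ^ (-aL) * (c / 2) :=
        mul_le_mul_of_nonneg_left hinvτ hpL.le
      linarith
    nlinarith [hpL, hmain, herr']
  -- monotonicity of g
  set g : ℝ → ℝ := fun t => ε * ρ t - c / 2 * Real.log t with hgdef
  have hg' : ∀ t, T₀ ≤ t → HasDerivAt g
      (ε * (∑ K ∈ Finset.Icc L n, t ^ (-(((M : ℝ) + (K : ℝ)) / (N : ℝ))) * Λ K (ρ t) (φ t))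
        - c / 2 * t⁻¹) t := by
    intro t ht
    have h1 := (hρ t (le_trans hT₀τ₁ ht)).const_mul ε
    have h2 := (Real.hasDerivAt_log (ne_of_gt (lt_of_lt_of_le hT₀pos ht))).const_mul (c / 2)
    exact h1.sub h2
  have hmono : MonotoneOn g (Set.Ici T₀) := by
    apply monotoneOn_of_deriv_nonneg (convex_Ici T₀)
    · exact fun t ht => (hg' t ht).continuousAt.continuousWithinAt
    · intro t ht
      rw [interior_Ici] at ht
      exact ((hg' t ht.le).differentiableAt).differentiableWithinAt
    · intro t ht
      rw [interior_Ici] at ht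
      rw [(hg' t ht.le).deriv]
      have := key t ht.le
      linarith
  -- contradiction
  set X : ℝ := (4 * R + 2) / c with hXdef
  have hX : 0 ≤ X := by positivity
  set τ₂ : ℝ := T₀ * Real.exp X with hτ₂def
  have hτ₂T : T₀ ≤ τ₂ := by
    nlinarith [Real.one_le_exp hX, hT₀pos]
  have hmg := hmono Set.self_mem_Ici (Set.mem_Ici.mpr hτ₂T) hτ₂T
  simp only [hgdef] at hmg
  have hlog : Real.log τ₂ = Real.log T₀ + X := by
    rw [hτ₂def, Real.log_mul (ne_of_gt hT₀pos) (Real.exp_ne_zero X), Real.log_exp]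
  rw [hlog] at hmg
  have hb1 : ε * ρ τ₂ ≤ R := by
    have h := hρR τ₂ (le_trans hT₀τ₁ hτ₂T)
    calc ε * ρ τ₂ ≤ |ε * ρ τ₂| := le_abs_self _
      _ = |ρ τ₂| := by rw [abs_mul, hεabs, one_mul]
      _ ≤ R := h
  have hb2 : -R ≤ ε * ρ T₀ := by
    have h := hρR T₀ hT₀τ₁
    have := neg_abs_le (ε * ρ T₀)
    have habs : |ε * ρ T₀| = |ρ T₀| := by rw [abs_mul, hεabs, one_mul]
    rw [habs] at this
    linarith
  have hcX : c / 2 * X = 2 * R + 1 := by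
    rw [hXdef]
    field_simp
    ring
  have hmulexp := mul_add (c / 2) (Real.log T₀) X
  linarith
end

section
/- Let N, M, D, L be integers with N ≥ 1, 1 ≤ M ≤ D, M + D < N and L ≥ 0, and let Δ₁ > 0, ε ∈ (0,1), κ > 0. Suppose V : ℝ² × [τ₁,∞) → ℝ is C¹ and for every τ ≥ τ₁ and every (ρ,φ) with W₀(ρ,φ,τ₁) ≤ Δ₁² one has (1−ε) W₀(ρ,φ,τ) ≤ V(ρ,φ,τ) ≤ (1+ε) W₀(ρ,φ,τ) and 𝒟V(ρ,φ,τ) ≤ −κ τ^{−(M+D)/N} V(ρ,φ,τ). Then there exists δ ∈ (0,Δ₁) such that every solution (ρ(τ),φ(τ)) on [τ₁,∞) with W₀(ρ(τ₁),φ(τ₁),τ₁) ≤ δ² satisfies W₀(ρ(τ),φ(τ),τ₁) ≤ Δ₁² for all τ ≥ τ₁ and, moreover, W₀(ρ(τ),φ(τ),τ₁) ≤ ((1+ε)/(1−ε)) δ² τ^{L/N} exp(−(κN/(N−M−D)) (τ^{(N−M−D)/N} − τ₁^{(N−M−D)/N})) for all τ ≥ τ₁; in particular (ρ(τ),φ(τ))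 → (0,0) as τ → ∞ (exponential stability of the zero solution). -/
open Real

/-- `W₀(ρ,φ,τ) = (Q ρ² + τ^{−L/N} λ₀ φ²)/2`. -/
noncomputable def W0 (Q lam0 : ℝ) (N L : ℕ) (ρ φ τ : ℝ) : ℝ :=
  (Q * ρ ^ 2 + τ ^ (-(L : ℝ) / (N : ℝ)) * lam0 * φ ^ 2) / 2

/-- Derivative of `V` along the system `dρ/dτ = τ^{−M/N} A(ρ,φ,τ)`,
`dφ/dτ = τ^{−M/N} B(ρ,φ,τ)`:
`𝒟V = ∂_τV + τ^{−M/N}(A ∂_ρV + B ∂_φV)`. -/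
noncomputable def DV (N M : ℕ) (A B V : ℝ → ℝ → ℝ → ℝ) (ρ φ τ : ℝ) : ℝ :=
  deriv (fun t => V ρ φ t) τ +
    τ ^ (-(M : ℝ) / (N : ℝ)) *
      (A ρ φ τ * deriv (fun r => V r φ τ) ρ + B ρ φ τ * deriv (fun p => V ρ p τ) φ)

/-- A solution on `[τ₁,∞)` of the planar system
`dρ/dτ = τ^{−M/N} A(ρ,φ,τ)`, `dφ/dτ = τ^{−M/N} B(ρ,φ,τ)`. -/
def IsSolution (N M : ℕ) (A B : ℝ → ℝ → ℝ → ℝ) (τ₁ : ℝ) (ρ φ : ℝ → ℝ) : Prop :=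
  ∀ τ ≥ τ₁, HasDerivAt ρ (τ ^ (-(M : ℝ) / (N : ℝ)) * A (ρ τ) (φ τ) τ) τ ∧
    HasDerivAt φ (τ ^ (-(M : ℝ) / (N : ℝ)) * B (ρ τ) (φ τ) τ) τ

/-- Chain rule: derivative of `V` along a curve, expressed through the partial
derivatives appearing in `DV`. -/
lemma statement8_chain (V : ℝ → ℝ → ℝ → ℝ)
    (hV : ContDiff ℝ 1 fun p : ℝ × ℝ × ℝ => V p.1 p.2.1 p.2.2)
    (ρ φ : ℝ → ℝ) (a b : ℝ) (τ : ℝ)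
    (hρ : HasDerivAt ρ a τ) (hφ : HasDerivAt φ b τ) :
    HasDerivAt (fun t => V (ρ t) (φ t) t)
      (a * deriv (fun r => V r (φ τ) τ) (ρ τ) + b * deriv (fun p => V (ρ τ) p τ) (φ τ)
        + deriv (fun t => V (ρ τ) (φ τ) t) τ) τ := by
  set F : ℝ × ℝ × ℝ → ℝ := fun p => V p.1 p.2.1 p.2.2 with hFdef
  have hFd : Differentiable ℝ F := hV.differentiable one_ne_zero
  set x : ℝ × ℝ × ℝ := (ρ τ, φ τ, τ) with hxdef
  have hF : HasFDerivAt F (fderiv ℝ F x) x := (hFd x).hasFDerivAt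
  set f := fderiv ℝ F x with hfdef
  have hcurve : HasDerivAt (fun t => ((ρ t, φ t, t) : ℝ × ℝ × ℝ)) ((a, b, 1) : ℝ × ℝ × ℝ) τ :=
    hρ.prodMk (hφ.prodMk (hasDerivAt_id τ))
  have hcomp : HasDerivAt (fun t => V (ρ t) (φ t) t) (f (a, b, 1)) τ :=
    (hF.comp_hasDerivAt τ hcurve :)
  have h1 : HasDerivAt (fun r => V r (φ τ) τ) (f (1, 0, 0)) (ρ τ) := by
    have hc : HasDerivAt (fun r => ((r, φ τ, τ) : ℝ × ℝ × ℝ)) ((1, 0, 0) : ℝ × ℝ × ℝ) (ρ τ) :=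
      (hasDerivAt_id (ρ τ)).prodMk ((hasDerivAt_const _ _).prodMk (hasDerivAt_const _ _))
    exact hF.comp_hasDerivAt (ρ τ) hc
  have h2 : HasDerivAt (fun p => V (ρ τ) p τ) (f (0, 1, 0)) (φ τ) := by
    have hc : HasDerivAt (fun p => ((ρ τ, p, τ) : ℝ × ℝ × ℝ)) ((0, 1, 0) : ℝ × ℝ × ℝ) (φ τ) :=
      (hasDerivAt_const _ _).prodMk ((hasDerivAt_id (φ τ)).prodMk (hasDerivAt_const _ _))
    exact hF.comp_hasDerivAt (φ τ) hc
  have h3 : HasDerivAt (fun t => V (ρ τ) (φ τ) t) (f (0, 0, 1)) τ := by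
    have hc : HasDerivAt (fun t => ((ρ τ, φ τ, t) : ℝ × ℝ × ℝ)) ((0, 0, 1) : ℝ × ℝ × ℝ) τ :=
      (hasDerivAt_const _ _).prodMk ((hasDerivAt_const _ _).prodMk (hasDerivAt_id τ))
    exact hF.comp_hasDerivAt τ hc
  rw [h1.deriv, h2.deriv, h3.deriv]
  have hvec : ((a, b, 1) : ℝ × ℝ × ℝ)
      = a • ((1, 0, 0) : ℝ × ℝ × ℝ) + b • ((0, 1, 0) : ℝ × ℝ × ℝ)
        + (1 : ℝ) • ((0, 0, 1) : ℝ × ℝ × ℝ) := by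
    simp [Prod.ext_iff]
  have : f (a, b, 1) = a * f (1, 0, 0) + b * f (0, 1, 0) + f (0, 0, 1) := by
    rw [hvec, map_add, map_add, map_smul, map_smul, map_smul]
    simp [smul_eq_mul]
  rw [← this]; exact hcomp

set_option maxHeartbeats 1000000 in
/-- exponential stability, case `γ_D < 0`, `M + D < N`: If the Lyapunov
function `V` is sandwiched between `(1±ε) W₀` and satisfies
`𝒟V ≤ −κ τ^{−(M+D)/N} V` on the region `{W₀(·,·,τ₁) ≤ Δ₁²}`, then there is `δ ∈ (0,Δ₁)`
such that every solution starting with `W₀ ≤ δ²` stays in the region and obeys the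
exponential bound
`W₀(ρ(τ),φ(τ),τ₁) ≤ ((1+ε)/(1−ε)) δ² τ^{L/N} exp(−(κN/(N−M−D))(τ^{(N−M−D)/N} − τ₁^{(N−M−D)/N}))`;
in particular `(ρ(τ),φ(τ)) → (0,0)`. -/
theorem statement8 (Q lam0 : ℝ) (hQ : 0 < Q) (hlam0 : 0 < lam0)
    (N M D L : ℕ) (hN : 1 ≤ N) (hM : 1 ≤ M) (hMD : M ≤ D) (hMDN : M + D < N)
    (τ₁ : ℝ) (hτ₁ : 1 ≤ τ₁)
    (A B : ℝ → ℝ → ℝ → ℝ)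
    (hA : Continuous fun p : ℝ × ℝ × ℝ => A p.1 p.2.1 p.2.2)
    (hB : Continuous fun p : ℝ × ℝ × ℝ => B p.1 p.2.1 p.2.2)
    (hA0 : ∀ τ ≥ τ₁, A 0 0 τ = 0) (hB0 : ∀ τ ≥ τ₁, B 0 0 τ = 0)
    (Δ₁ ε κ : ℝ) (hΔ₁ : 0 < Δ₁) (hε : ε ∈ Set.Ioo (0 : ℝ) 1) (hκ : 0 < κ)
    (V : ℝ → ℝ → ℝ → ℝ)
    (hV : ContDiff ℝ 1 fun p : ℝ × ℝ × ℝ => V p.1 p.2.1 p.2.2)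
    (hsand : ∀ τ ≥ τ₁, ∀ ρ φ : ℝ, W0 Q lam0 N L ρ φ τ₁ ≤ Δ₁ ^ 2 →
      (1 - ε) * W0 Q lam0 N L ρ φ τ ≤ V ρ φ τ ∧ V ρ φ τ ≤ (1 + ε) * W0 Q lam0 N L ρ φ τ)
    (hdecay : ∀ τ ≥ τ₁, ∀ ρ φ : ℝ, W0 Q lam0 N L ρ φ τ₁ ≤ Δ₁ ^ 2 →
      DV N M A B V ρ φ τ ≤ -κ * τ ^ (-((M : ℝ) + (D : ℝ)) / (N : ℝ)) * V ρ φ τ) :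
    ∃ δ : ℝ, 0 < δ ∧ δ < Δ₁ ∧
      ∀ ρ φ : ℝ → ℝ, IsSolution N M A B τ₁ ρ φ →
        W0 Q lam0 N L (ρ τ₁) (φ τ₁) τ₁ ≤ δ ^ 2 →
        (∀ τ ≥ τ₁, W0 Q lam0 N L (ρ τ) (φ τ) τ₁ ≤ Δ₁ ^ 2) ∧
        (∀ τ ≥ τ₁, W0 Q lam0 N L (ρ τ) (φ τ) τ₁ ≤
          ((1 + ε) / (1 - ε)) * δ ^ 2 * τ ^ ((L : ℝ) / (N : ℝ)) *
            Real.exp (-(κ * (N : ℝ) / ((N : ℝ) - (M : ℝ) - (D : ℝ))) *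
              (τ ^ (((N : ℝ) - (M : ℝ) - (D : ℝ)) / (N : ℝ)) -
                τ₁ ^ (((N : ℝ) - (M : ℝ) - (D : ℝ)) / (N : ℝ))))) ∧
        Filter.Tendsto (fun τ => (ρ τ, φ τ)) Filter.atTop (nhds (0, 0)) := by
  obtain ⟨hε0, hε1⟩ := hε
  have h1ε : (0 : ℝ) < 1 - ε := by linarith
  have hNpos : (0 : ℝ) < (N : ℝ) := by exact_mod_cast Nat.lt_of_lt_of_le Nat.zero_lt_one hN
  have hNMD : (0 : ℝ) < (N : ℝ) - (M : ℝ) - (D : ℝ) := by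
    have : (M : ℝ) + (D : ℝ) < (N : ℝ) := by exact_mod_cast hMDN
    linarith
  set α : ℝ := ((N : ℝ) - (M : ℝ) - (D : ℝ)) / (N : ℝ) with hαdef
  set c : ℝ := κ * (N : ℝ) / ((N : ℝ) - (M : ℝ) - (D : ℝ)) with hcdef
  have hα : 0 < α := div_pos hNMD hNpos
  have hc : 0 < c := div_pos (mul_pos hκ hNpos) hNMD
  have hcα : c * α = κ := by
    rw [hcdef, hαdef]
    field_simp
  have hα1 : α - 1 = -((M : ℝ) + (D : ℝ)) / (N : ℝ) := by
    rw [hαdef, div_sub_one hNpos.ne']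
    congr 1
    ring
  set E : ℝ → ℝ := fun τ => Real.exp (c * (τ ^ α - τ₁ ^ α)) with hEdef
  have hEpos : ∀ τ : ℝ, 0 < E τ := fun τ => Real.exp_pos _
  have hEone : E τ₁ = 1 := by simp [hEdef]
  have hE' : ∀ x : ℝ, 0 < x →
      HasDerivAt E (κ * x ^ (-((M : ℝ) + (D : ℝ)) / (N : ℝ)) * E x) x := by
    intro x hx
    have hin : HasDerivAt (fun τ : ℝ => c * (τ ^ α - τ₁ ^ α)) (c * (α * x ^ (α - 1))) x :=
      (((Real.hasDerivAt_rpow_const (Or.inl hx.ne'))).sub_const _).const_mul c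
    have := hin.exp
    convert this using 1
    rw [← hα1, ← hcα]; ring
  -- W0 is nonneg and weight comparison
  have hW0nonneg : ∀ r p τ : ℝ, 0 < τ → 0 ≤ W0 Q lam0 N L r p τ := by
    intro r p τ hτ
    have h1 : 0 < τ ^ (-(L : ℝ) / (N : ℝ)) := Real.rpow_pos_of_pos hτ _
    have := sq_nonneg r; have := sq_nonneg p
    unfold W0
    positivity
  have hWcmp : ∀ r p x : ℝ, τ₁ ≤ x →
      W0 Q lam0 N L r p τ₁ ≤ x ^ ((L : ℝ) / (N : ℝ)) * W0 Q lam0 N L r p x := by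
    intro r p x hx
    have hx1 : (1 : ℝ) ≤ x := le_trans hτ₁ hx
    have hx0 : (0 : ℝ) < x := lt_of_lt_of_le one_pos hx1
    have hP1 : (1 : ℝ) ≤ x ^ ((L : ℝ) / (N : ℝ)) :=
      Real.one_le_rpow hx1 (by positivity)
    have hτ1w : τ₁ ^ (-(L : ℝ) / (N : ℝ)) ≤ 1 :=
      Real.rpow_le_one_of_one_le_of_nonpos hτ₁ (by
        rw [neg_div, neg_nonpos]
        positivity)
    have hprod : x ^ ((L : ℝ) / (N : ℝ)) * x ^ (-(L : ℝ) / (N : ℝ)) = 1 := by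
      rw [← Real.rpow_add hx0]
      have hz : (L : ℝ) / (N : ℝ) + -(L : ℝ) / (N : ℝ) = 0 := by ring
      rw [hz, Real.rpow_zero]
    have hw0 : 0 < τ₁ ^ (-(L : ℝ) / (N : ℝ)) := Real.rpow_pos_of_pos (by linarith) _
    unfold W0
    have e1 : Q * r ^ 2 ≤ x ^ ((L : ℝ) / (N : ℝ)) * (Q * r ^ 2) := by
      nlinarith [mul_nonneg (sub_nonneg.mpr hP1) (mul_nonneg hQ.le (sq_nonneg r))]
    have e2 : τ₁ ^ (-(L : ℝ) / (N : ℝ)) * lam0 * p ^ 2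
        ≤ x ^ ((L : ℝ) / (N : ℝ)) * (x ^ (-(L : ℝ) / (N : ℝ)) * lam0 * p ^ 2) := by
      have : x ^ ((L : ℝ) / (N : ℝ)) * (x ^ (-(L : ℝ) / (N : ℝ)) * lam0 * p ^ 2)
          = lam0 * p ^ 2 := by
        rw [← mul_assoc, ← mul_assoc, hprod, one_mul]
      rw [this]
      nlinarith [mul_nonneg (sub_nonneg.mpr hτ1w) (mul_nonneg hlam0.le (sq_nonneg p))]
    have expand : x ^ ((L : ℝ) / (N : ℝ))
        * ((Q * r ^ 2 + x ^ (-(L : ℝ) / (N : ℝ)) * lam0 * p ^ 2) / 2)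
        = (x ^ ((L : ℝ) / (N : ℝ)) * (Q * r ^ 2)
          + x ^ ((L : ℝ) / (N : ℝ)) * (x ^ (-(L : ℝ) / (N : ℝ)) * lam0 * p ^ 2)) / 2 := by
      ring
    rw [expand]
    linarith
  -- the decaying envelope F and its sup
  set F : ℝ → ℝ := fun τ => τ ^ ((L : ℝ) / (N : ℝ)) * Real.exp (-c * (τ ^ α - τ₁ ^ α))
    with hFdef
  have hFpos : ∀ τ : ℝ, τ₁ ≤ τ → 0 < F τ := by
    intro τ hτ
    have : (0:ℝ) < τ := lt_of_lt_of_le one_pos (le_trans hτ₁ hτ)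
    exact mul_pos (Real.rpow_pos_of_pos this _) (Real.exp_pos _)
  have hFtend : Filter.Tendsto F Filter.atTop (nhds 0) := by
    have hG : Filter.Tendsto
        (fun y : ℝ => y ^ ((L : ℝ) / (N : ℝ) / α) * Real.exp (-c * y))
        Filter.atTop (nhds 0) :=
      tendsto_rpow_mul_exp_neg_mul_atTop_nhds_zero _ c hc
    have hcompTend : Filter.Tendsto
        (fun τ : ℝ => (τ ^ α) ^ ((L : ℝ) / (N : ℝ) / α) * Real.exp (-c * τ ^ α))
        Filter.atTop (nhds 0) := hG.comp (tendsto_rpow_atTop hα)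
    have hmul : Filter.Tendsto
        (fun τ : ℝ => (τ ^ α) ^ ((L : ℝ) / (N : ℝ) / α) * Real.exp (-c * τ ^ α)
          * Real.exp (c * τ₁ ^ α)) Filter.atTop (nhds 0) := by
      simpa using hcompTend.mul_const (Real.exp (c * τ₁ ^ α))
    apply hmul.congr'
    filter_upwards [Filter.eventually_ge_atTop (1 : ℝ)] with τ hτ
    have hτ0 : (0 : ℝ) ≤ τ := by linarith
    have h1 : (τ ^ α) ^ ((L : ℝ) / (N : ℝ) / α) = τ ^ ((L : ℝ) / (N : ℝ)) := by
      rw [← Real.rpow_mul hτ0]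
      congr 1
      field_simp [hα.ne']
    have h2 : Real.exp (-c * τ ^ α) * Real.exp (c * τ₁ ^ α)
        = Real.exp (-c * (τ ^ α - τ₁ ^ α)) := by
      rw [← Real.exp_add]; congr 1; ring
    simp only [hFdef]
    rw [mul_assoc, h1, h2]
  obtain ⟨S, hS1, hSbound⟩ : ∃ S : ℝ, 1 ≤ S ∧ ∀ τ ≥ τ₁, F τ ≤ S := by
    have hev : ∀ᶠ τ in Filter.atTop, F τ < 1 :=
      hFtend.eventually_lt_const one_pos
    obtain ⟨T, hT⟩ := Filter.eventually_atTop.mp hev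
    set T' := max T τ₁ with hT'def
    have hτ₁T' : τ₁ ≤ T' := le_max_right _ _
    have hFcont : ContinuousOn F (Set.Icc τ₁ T') := by
      intro x hx
      have hx0 : (0:ℝ) < x := lt_of_lt_of_le one_pos (le_trans hτ₁ hx.1)
      apply ContinuousWithinAt.mul
      · exact (Real.continuousAt_rpow_const x _ (Or.inl hx0.ne')).continuousWithinAt
      · apply Continuous.continuousWithinAt
        apply Real.continuous_exp.comp
        apply Continuous.mul continuous_const
        apply Continuous.sub ?_ continuous_const
        exact (Real.continuous_rpow_const hα.le)
    obtain ⟨x₀, hx₀mem, hx₀max⟩ :=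
      isCompact_Icc.exists_isMaxOn (Set.nonempty_Icc.mpr hτ₁T') hFcont
    refine ⟨max (F x₀) 1, le_max_right _ _, fun τ hτ => ?_⟩
    rcases le_or_gt τ T' with h | h
    · exact le_trans (hx₀max ⟨hτ, h⟩) (le_max_left _ _)
    · exact le_trans (hT τ (le_trans (le_max_left _ _) h.le)).le (le_max_right _ _)
  -- choose δ
  set Cq : ℝ := (1 + ε) / (1 - ε) with hCqdef
  have hCq1 : 1 ≤ Cq := by
    rw [hCqdef, le_div_iff₀ h1ε]; linarith
  have hCqpos : 0 < Cq := lt_of_lt_of_le one_pos hCq1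
  have hxpos : (0:ℝ) < 2 * Cq * S := by positivity
  set δ : ℝ := Δ₁ / Real.sqrt (2 * Cq * S) with hδdef
  have hsq1 : (1:ℝ) < Real.sqrt (2 * Cq * S) := by
    rw [show (1:ℝ) = Real.sqrt 1 by simp]
    apply Real.sqrt_lt_sqrt (by norm_num)
    nlinarith
  have hδpos : 0 < δ := div_pos hΔ₁ (lt_trans one_pos hsq1)
  have hδΔ : δ < Δ₁ := by
    rw [hδdef, div_lt_iff₀ (lt_trans one_pos hsq1)]
    nlinarith
  have hδsq : δ ^ 2 = Δ₁ ^ 2 / (2 * Cq * S) := by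
    rw [hδdef, div_pow, Real.sq_sqrt hxpos.le]
  have hδsqle : Cq * δ ^ 2 * S ≤ Δ₁ ^ 2 / 2 := by
    rw [hδsq]
    have hS0 : S ≠ 0 := by positivity
    have : Cq * (Δ₁ ^ 2 / (2 * Cq * S)) * S = Δ₁ ^ 2 / 2 := by
      field_simp
    exact this.le
  have hδΔsq : δ ^ 2 ≤ Δ₁ ^ 2 := by nlinarith
  refine ⟨δ, hδpos, hδΔ, ?_⟩
  intro ρ φ hsol hinit
  -- the composed functions
  set g : ℝ → ℝ := fun τ => V (ρ τ) (φ τ) τ with hgdef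
  set W : ℝ → ℝ := fun τ => W0 Q lam0 N L (ρ τ) (φ τ) τ₁ with hWdef
  have hg' : ∀ x : ℝ, τ₁ ≤ x → HasDerivAt g (DV N M A B V (ρ x) (φ x) x) x := by
    intro x hx
    obtain ⟨hρd, hφd⟩ := hsol x hx
    have := statement8_chain V hV ρ φ _ _ x hρd hφd
    convert this using 1
    unfold DV
    ring
  have hWcont : ∀ x : ℝ, τ₁ ≤ x → ContinuousAt W x := by
    intro x hx
    obtain ⟨hρd, hφd⟩ := hsol x hx
    have hρc := hρd.continuousAt
    have hφc := hφd.continuousAt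
    simp only [hWdef]
    unfold W0
    fun_prop
  -- Gronwall on an interval where the region condition holds
  have gron : ∀ b : ℝ, τ₁ ≤ b → (∀ s ∈ Set.Icc τ₁ b, W s ≤ Δ₁ ^ 2) →
      ∀ τ ∈ Set.Icc τ₁ b, g τ * E τ ≤ g τ₁ := by
    intro b hb hreg τ hτ
    set h : ℝ → ℝ := fun τ => g τ * E τ with hhdef
    have hderiv : ∀ x ∈ Set.Icc τ₁ b, HasDerivAt h
        (DV N M A B V (ρ x) (φ x) x * E x
          + g x * (κ * x ^ (-((M : ℝ) + (D : ℝ)) / (N : ℝ)) * E x)) x := by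
      intro x hx
      have hx0 : (0:ℝ) < x := lt_of_lt_of_le one_pos (le_trans hτ₁ hx.1)
      exact (hg' x hx.1).mul (hE' x hx0)
    have hanti : AntitoneOn h (Set.Icc τ₁ b) := by
      apply antitoneOn_of_deriv_nonpos (convex_Icc _ _)
      · intro x hx
        exact (hderiv x hx).continuousAt.continuousWithinAt
      · intro x hx
        rw [interior_Icc] at hx
        exact (hderiv x ⟨hx.1.le, hx.2.le⟩).differentiableAt.differentiableWithinAt
      · intro x hx
        rw [interior_Icc] at hx
        have hx' : x ∈ Set.Icc τ₁ b := ⟨hx.1.le, hx.2.le⟩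
        rw [(hderiv x hx').deriv]
        have hd := hdecay x hx.1.le (ρ x) (φ x) (hreg x hx')
        have hEx := hEpos x
        have h1 : DV N M A B V (ρ x) (φ x) x
            + κ * x ^ (-((M : ℝ) + (D : ℝ)) / (N : ℝ)) * g x ≤ 0 := by
          have : -κ * x ^ (-((M : ℝ) + (D : ℝ)) / (N : ℝ)) * V (ρ x) (φ x) x
              = -(κ * x ^ (-((M : ℝ) + (D : ℝ)) / (N : ℝ)) * g x) := by
            simp only [hgdef]; ring
          rw [this] at hd
          linarith
        have h2 := mul_nonpos_of_nonpos_of_nonneg h1 hEx.le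
        nlinarith [h2]
    have := hanti (Set.left_mem_Icc.mpr hb) hτ hτ.1
    simpa [hhdef, hEone] using this
  -- main estimate on an interval where the region condition holds
  have main : ∀ b : ℝ, τ₁ ≤ b → (∀ s ∈ Set.Icc τ₁ b, W s ≤ Δ₁ ^ 2) →
      ∀ τ ∈ Set.Icc τ₁ b, W τ ≤ Cq * δ ^ 2 * F τ := by
    intro b hb hreg τ hτ
    have hτx : τ₁ ≤ τ := hτ.1
    have hτpos : (0:ℝ) < τ := lt_of_lt_of_le one_pos (le_trans hτ₁ hτx)
    have hgE := gron b hb hreg τ hτ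
    have hinit' : W τ₁ ≤ Δ₁ ^ 2 := le_trans hinit hδΔsq
    have hsand1 := hsand τ₁ le_rfl (ρ τ₁) (φ τ₁) hinit'
    have hsandτ := hsand τ hτx (ρ τ) (φ τ) (hreg τ hτ)
    have hgτ₁ : g τ₁ ≤ (1 + ε) * δ ^ 2 := by
      have := hsand1.2
      have hW1 : W0 Q lam0 N L (ρ τ₁) (φ τ₁) τ₁ ≤ δ ^ 2 := hinit
      nlinarith
    have hgτ : g τ ≤ (1 + ε) * δ ^ 2 * Real.exp (-c * (τ ^ α - τ₁ ^ α)) := by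
      have hEτ := hEpos τ
      have hinv : Real.exp (-c * (τ ^ α - τ₁ ^ α)) = (E τ)⁻¹ := by
        rw [hEdef, ← Real.exp_neg]; congr 1; ring
      rw [hinv]
      have h1 : g τ ≤ g τ₁ * (E τ)⁻¹ := by
        rw [← div_eq_mul_inv]
        exact (le_div_iff₀ hEτ).mpr hgE
      calc g τ ≤ g τ₁ * (E τ)⁻¹ := h1
        _ ≤ (1 + ε) * δ ^ 2 * (E τ)⁻¹ := by
            apply mul_le_mul_of_nonneg_right hgτ₁ (by positivity)
    -- combine
    have hw1 : W τ ≤ τ ^ ((L : ℝ) / (N : ℝ)) * W0 Q lam0 N L (ρ τ) (φ τ) τ :=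
      hWcmp (ρ τ) (φ τ) τ hτx
    have hw2 : (1 - ε) * W0 Q lam0 N L (ρ τ) (φ τ) τ ≤ g τ := hsandτ.1
    have hP : (0:ℝ) < τ ^ ((L : ℝ) / (N : ℝ)) := Real.rpow_pos_of_pos hτpos _
    have hEe : (0:ℝ) < Real.exp (-c * (τ ^ α - τ₁ ^ α)) := Real.exp_pos _
    have goal' : (1 - ε) * W τ
        ≤ (1 + ε) * δ ^ 2 * (τ ^ ((L : ℝ) / (N : ℝ)) * Real.exp (-c * (τ ^ α - τ₁ ^ α))) := by
      calc (1 - ε) * W τ ≤ (1 - ε) * (τ ^ ((L : ℝ) / (N : ℝ)) * W0 Q lam0 N L (ρ τ) (φ τ) τ) :=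
            mul_le_mul_of_nonneg_left hw1 h1ε.le
        _ = τ ^ ((L : ℝ) / (N : ℝ)) * ((1 - ε) * W0 Q lam0 N L (ρ τ) (φ τ) τ) := by ring
        _ ≤ τ ^ ((L : ℝ) / (N : ℝ)) * g τ := mul_le_mul_of_nonneg_left hw2 hP.le
        _ ≤ τ ^ ((L : ℝ) / (N : ℝ)) * ((1 + ε) * δ ^ 2 * Real.exp (-c * (τ ^ α - τ₁ ^ α))) :=
            mul_le_mul_of_nonneg_left hgτ hP.le
        _ = (1 + ε) * δ ^ 2 * (τ ^ ((L : ℝ) / (N : ℝ)) * Real.exp (-c * (τ ^ α - τ₁ ^ α))) := by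
            ring
    have : W τ ≤ (1 + ε) * δ ^ 2 * (τ ^ ((L : ℝ) / (N : ℝ))
        * Real.exp (-c * (τ ^ α - τ₁ ^ α))) / (1 - ε) := by
      rw [le_div_iff₀ h1ε]
      linarith [goal']
    calc W τ ≤ _ := this
      _ = Cq * δ ^ 2 * F τ := by
          simp only [hCqdef, hFdef]
          ring
  -- region invariance
  have region : ∀ τ ≥ τ₁, W τ ≤ Δ₁ ^ 2 := by
    by_contra hcon
    push_neg at hcon
    set Sbad : Set ℝ := {τ | τ₁ ≤ τ ∧ Δ₁ ^ 2 < W τ} with hSbaddef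
    have hne : Sbad.Nonempty := by
      obtain ⟨τ, hτ, hW⟩ := hcon
      exact ⟨τ, hτ, hW⟩
    have hbdd : BddBelow Sbad := ⟨τ₁, fun x hx => hx.1⟩
    set t : ℝ := sInf Sbad with htdef
    have ht1 : τ₁ ≤ t := le_csInf hne (fun x hx => hx.1)
    -- W t ≥ Δ₁²
    have hWt_ge : Δ₁ ^ 2 ≤ W t := by
      obtain ⟨u, hmono, htend, hmem⟩ := exists_seq_tendsto_sInf hne hbdd
      have hcnt : Filter.Tendsto (fun n => W (u n)) Filter.atTop (nhds (W t)) :=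
        (hWcont t ht1).tendsto.comp htend
      exact ge_of_tendsto hcnt (Filter.Eventually.of_forall fun n => (hmem n).2.le)
    -- region on [τ₁, t]
    have hregt : ∀ s ∈ Set.Icc τ₁ t, W s ≤ Δ₁ ^ 2 := by
      intro s hs
      rcases lt_or_eq_of_le hs.2 with h | h
      · by_contra hWs
        push_neg at hWs
        have : s ∈ Sbad := ⟨hs.1, hWs⟩
        exact absurd (csInf_le hbdd this) (not_le.mpr h)
      · rcases eq_or_lt_of_le hs.1 with h' | h'
        · rw [← h']; exact le_trans hinit hδΔsq
        · -- s = t > τ₁ : left limit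
          have hlim : Filter.Tendsto W (nhdsWithin s (Set.Iio s)) (nhds (W s)) :=
            (hWcont s hs.1).continuousWithinAt.tendsto
          apply le_of_tendsto hlim
          filter_upwards [Ioo_mem_nhdsLT_of_mem (Set.mem_Ioc.mpr ⟨h', le_refl s⟩)] with
            y hy
          by_contra hWy
          push_neg at hWy
          have : y ∈ Sbad := ⟨hy.1.le, hWy⟩
          have hyt : y < t := by rw [← h]; exact hy.2
          exact absurd (csInf_le hbdd this) (not_le.mpr hyt)
    -- contradiction
    have hWt_le : W t ≤ Cq * δ ^ 2 * F t :=
      main t ht1 hregt t (Set.right_mem_Icc.mpr ht1)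
    have hFt : F t ≤ S := hSbound t ht1
    have : W t ≤ Δ₁ ^ 2 / 2 := by
      calc W t ≤ Cq * δ ^ 2 * F t := hWt_le
        _ ≤ Cq * δ ^ 2 * S := by
            apply mul_le_mul_of_nonneg_left hFt (by positivity)
        _ ≤ Δ₁ ^ 2 / 2 := hδsqle
    nlinarith [hWt_ge, hΔ₁]
  -- final bound
  have bound : ∀ τ ≥ τ₁, W τ ≤ Cq * δ ^ 2 * F τ := by
    intro τ hτ
    exact main τ hτ (fun s hs => region s hs.1) τ (Set.right_mem_Icc.mpr hτ)
  refine ⟨region, ?_, ?_⟩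
  · intro τ hτ
    have := bound τ hτ
    calc W0 Q lam0 N L (ρ τ) (φ τ) τ₁ = W τ := rfl
      _ ≤ Cq * δ ^ 2 * F τ := this
      _ = ((1 + ε) / (1 - ε)) * δ ^ 2 * τ ^ ((L : ℝ) / (N : ℝ)) *
            Real.exp (-(κ * (N : ℝ) / ((N : ℝ) - (M : ℝ) - (D : ℝ))) *
              (τ ^ (((N : ℝ) - (M : ℝ) - (D : ℝ)) / (N : ℝ)) -
                τ₁ ^ (((N : ℝ) - (M : ℝ) - (D : ℝ)) / (N : ℝ)))) := by
          rw [hFdef, hCqdef, hcdef, hαdef]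
          ring
  -- tendsto
  · have hWtend : Filter.Tendsto W Filter.atTop (nhds 0) := by
      have h0 : ∀ᶠ τ in Filter.atTop, 0 ≤ W τ := by
        filter_upwards [Filter.eventually_ge_atTop τ₁] with τ hτ
        exact hW0nonneg (ρ τ) (φ τ) τ₁ (lt_of_lt_of_le one_pos hτ₁)
      have hle : ∀ᶠ τ in Filter.atTop, W τ ≤ Cq * δ ^ 2 * F τ := by
        filter_upwards [Filter.eventually_ge_atTop τ₁] with τ hτ
        exact bound τ hτ
      have hlim : Filter.Tendsto (fun τ => Cq * δ ^ 2 * F τ) Filter.atTop (nhds 0) := by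
        have := hFtend.const_mul (Cq * δ ^ 2)
        rw [mul_zero] at this
        exact this
      exact squeeze_zero' h0 hle hlim
    have hτ₁w : (0:ℝ) < τ₁ ^ (-(L : ℝ) / (N : ℝ)) :=
      Real.rpow_pos_of_pos (lt_of_lt_of_le one_pos hτ₁) _
    have hρsq : Filter.Tendsto (fun τ => ρ τ ^ 2) Filter.atTop (nhds 0) := by
      apply squeeze_zero' (Filter.Eventually.of_forall fun τ => sq_nonneg _)
        (g := fun τ => (2 / Q) * W τ)
      · apply Filter.Eventually.of_forall
        intro τ
        have h1 : W τ = (Q * ρ τ ^ 2 + τ₁ ^ (-(L : ℝ) / (N : ℝ)) * lam0 * φ τ ^ 2) / 2 := rfl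
        have h2 : 0 ≤ τ₁ ^ (-(L : ℝ) / (N : ℝ)) * lam0 * φ τ ^ 2 := by positivity
        rw [div_mul_eq_mul_div, le_div_iff₀ hQ, h1]
        nlinarith [h2]
      · have := hWtend.const_mul (2 / Q)
        rw [mul_zero] at this
        exact this
    have hφsq : Filter.Tendsto (fun τ => φ τ ^ 2) Filter.atTop (nhds 0) := by
      apply squeeze_zero' (Filter.Eventually.of_forall fun τ => sq_nonneg _)
        (g := fun τ => (2 / (τ₁ ^ (-(L : ℝ) / (N : ℝ)) * lam0)) * W τ)
      · apply Filter.Eventually.of_forall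
        intro τ
        have h1 : W τ = (Q * ρ τ ^ 2 + τ₁ ^ (-(L : ℝ) / (N : ℝ)) * lam0 * φ τ ^ 2) / 2 := rfl
        have h2 : 0 ≤ Q * ρ τ ^ 2 := by positivity
        have h3 : 0 < τ₁ ^ (-(L : ℝ) / (N : ℝ)) * lam0 := by positivity
        rw [div_mul_eq_mul_div, le_div_iff₀ h3, h1]
        nlinarith [h2]
      · have := hWtend.const_mul (2 / (τ₁ ^ (-(L : ℝ) / (N : ℝ)) * lam0))
        rw [mul_zero] at this
        exact this
    have habs : ∀ f : ℝ → ℝ, Filter.Tendsto (fun τ => f τ ^ 2) Filter.atTop (nhds 0) →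
        Filter.Tendsto f Filter.atTop (nhds 0) := by
      intro f hf
      rw [tendsto_zero_iff_abs_tendsto_zero]
      have : Filter.Tendsto (fun τ => Real.sqrt (f τ ^ 2)) Filter.atTop (nhds 0) := by
        have := (Real.continuous_sqrt.tendsto' 0 0 Real.sqrt_zero).comp hf
        exact this
      apply this.congr
      intro τ
      exact Real.sqrt_sq_eq_abs (f τ)
    exact (habs ρ hρsq).prodMk_nhds (habs φ hφsq)
end

section
/- Let N, M, D, L be integers with N ≥ 1, 1 ≤ M ≤ D, M + D = N and L ≥ 0, and let Δ₁ > 0, ε ∈ (0,1), and κ > L/N. Suppose V : ℝ² × [τ₁,∞) → ℝ is C¹ and for every τ ≥ τ₁ and every (ρ,φ) with W₀(ρ,φ,τ₁) ≤ Δ₁² one has (1−ε) W₀(ρ,φ,τ) ≤ V(ρ,φ,τ) ≤ (1+ε) W₀(ρ,φ,τ) and 𝒟V(ρ,φ,τ) ≤ −κ τ^{−1} V(ρ,φ,τ). Then there exists δ ∈ (0,Δ₁) such that every solution (ρ(τ),φ(τ)) on [τ₁,∞) with W₀(ρ(τ₁),φ(τ₁),τ₁) ≤ δ² satisfies W₀(ρ(τ),φ(τ),τ₁)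 ≤ Δ₁² for all τ ≥ τ₁ and, moreover, W₀(ρ(τ),φ(τ),τ₁) ≤ ((1+ε)/(1−ε)) δ² (τ/τ₁)^{L/N − κ} for all τ ≥ τ₁; in particular (ρ(τ),φ(τ)) → (0,0) as τ → ∞ (polynomial stability of the zero solution). -/
open Real

set_option maxHeartbeats 1000000

/-- Chain rule along a trajectory for a `C¹` function of three variables. -/
lemma hasDerivAt_comp3 (V : ℝ → ℝ → ℝ → ℝ)
    (hV : ContDiff ℝ 1 fun p : ℝ × ℝ × ℝ => V p.1 p.2.1 p.2.2)
    (ρ φ : ℝ → ℝ) (τ rd pd : ℝ)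
    (hρ : HasDerivAt ρ rd τ) (hφ : HasDerivAt φ pd τ) :
    HasDerivAt (fun s => V (ρ s) (φ s) s)
      (deriv (fun t => V (ρ τ) (φ τ) t) τ +
        rd * deriv (fun r => V r (φ τ) τ) (ρ τ) +
        pd * deriv (fun p => V (ρ τ) p τ) (φ τ)) τ := by
  set F : ℝ × ℝ × ℝ → ℝ := fun p => V p.1 p.2.1 p.2.2 with hFdef
  have hFd : Differentiable ℝ F := hV.differentiable one_ne_zero
  set x : ℝ × ℝ × ℝ := (ρ τ, φ τ, τ) with hxdef
  have hL : HasFDerivAt F (fderiv ℝ F x) x := (hFd x).hasFDerivAt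
  set Lm : ℝ × ℝ × ℝ →L[ℝ] ℝ := fderiv ℝ F x with hLm
  have h1 : HasDerivAt (fun r => V r (φ τ) τ) (Lm ((1:ℝ), (0:ℝ), (0:ℝ))) (ρ τ) := by
    have hg : HasDerivAt (fun r : ℝ => ((r, φ τ, τ) : ℝ × ℝ × ℝ)) ((1:ℝ), (0:ℝ), (0:ℝ)) (ρ τ) :=
      (hasDerivAt_id (ρ τ)).prodMk ((hasDerivAt_const _ _).prodMk (hasDerivAt_const _ _))
    exact hL.comp_hasDerivAt (ρ τ) hg
  have h2 : HasDerivAt (fun p => V (ρ τ) p τ) (Lm ((0:ℝ), (1:ℝ), (0:ℝ))) (φ τ) := by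
    have hg : HasDerivAt (fun p : ℝ => ((ρ τ, p, τ) : ℝ × ℝ × ℝ)) ((0:ℝ), (1:ℝ), (0:ℝ)) (φ τ) :=
      (hasDerivAt_const _ _).prodMk ((hasDerivAt_id (φ τ)).prodMk (hasDerivAt_const _ _))
    exact hL.comp_hasDerivAt (φ τ) hg
  have h3 : HasDerivAt (fun t => V (ρ τ) (φ τ) t) (Lm ((0:ℝ), (0:ℝ), (1:ℝ))) τ := by
    have hg : HasDerivAt (fun t : ℝ => ((ρ τ, φ τ, t) : ℝ × ℝ × ℝ)) ((0:ℝ), (0:ℝ), (1:ℝ)) τ :=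
      (hasDerivAt_const _ _).prodMk ((hasDerivAt_const _ _).prodMk (hasDerivAt_id τ))
    exact hL.comp_hasDerivAt τ hg
  have hg : HasDerivAt (fun s : ℝ => ((ρ s, φ s, s) : ℝ × ℝ × ℝ)) ((rd, pd, (1:ℝ))) τ :=
    hρ.prodMk (hφ.prodMk (hasDerivAt_id τ))
  have hcomp : HasDerivAt (fun s => V (ρ s) (φ s) s) (Lm ((rd, pd, (1:ℝ)))) τ := by
    exact hL.comp_hasDerivAt τ hg
  have hvec : ((rd, pd, (1:ℝ)) : ℝ × ℝ × ℝ) =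
      rd • ((1:ℝ), (0:ℝ), (0:ℝ)) + pd • ((0:ℝ), (1:ℝ), (0:ℝ)) + ((0:ℝ), (0:ℝ), (1:ℝ)) := by
    simp [Prod.ext_iff]
  have hlin : Lm ((rd, pd, (1:ℝ))) =
      rd * Lm ((1:ℝ), (0:ℝ), (0:ℝ)) + pd * Lm ((0:ℝ), (1:ℝ), (0:ℝ)) + Lm ((0:ℝ), (0:ℝ), (1:ℝ)) := by
    rw [hvec, map_add, map_add, map_smul, map_smul, smul_eq_mul, smul_eq_mul]
  rw [h1.deriv, h2.deriv, h3.deriv]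
  have : Lm ((0:ℝ), (0:ℝ), (1:ℝ)) + rd * Lm ((1:ℝ), (0:ℝ), (0:ℝ)) + pd * Lm ((0:ℝ), (1:ℝ), (0:ℝ))
      = Lm ((rd, pd, (1:ℝ))) := by rw [hlin]; ring
  rw [this]
  exact hcomp

/-- polynomial stability, case `γ_D < 0`, `M + D = N`: If the Lyapunov
function `V` is sandwiched between `(1±ε) W₀` and satisfies
`𝒟V ≤ −κ τ⁻¹ V` on the region `{W₀(·,·,τ₁) ≤ Δ₁²}`, then there is `δ ∈ (0,Δ₁)`
such that every solution starting with `W₀ ≤ δ²` stays in the region and obeys the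
polynomial bound `W₀(ρ(τ),φ(τ),τ₁) ≤ ((1+ε)/(1−ε)) δ² (τ/τ₁)^{L/N − κ}`;
in particular `(ρ(τ),φ(τ)) → (0,0)`. -/
theorem statement9 (Q lam0 : ℝ) (hQ : 0 < Q) (hlam0 : 0 < lam0)
    (N M D L : ℕ) (hN : 1 ≤ N) (hM : 1 ≤ M) (hMD : M ≤ D) (hMDN : M + D = N)
    (τ₁ : ℝ) (hτ₁ : 1 ≤ τ₁)
    (A B : ℝ → ℝ → ℝ → ℝ)
    (hA : Continuous fun p : ℝ × ℝ × ℝ => A p.1 p.2.1 p.2.2)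
    (hB : Continuous fun p : ℝ × ℝ × ℝ => B p.1 p.2.1 p.2.2)
    (hA0 : ∀ τ ≥ τ₁, A 0 0 τ = 0) (hB0 : ∀ τ ≥ τ₁, B 0 0 τ = 0)
    (Δ₁ ε κ : ℝ) (hΔ₁ : 0 < Δ₁) (hε : ε ∈ Set.Ioo (0 : ℝ) 1) (hκ : (L : ℝ) / (N : ℝ) < κ)
    (V : ℝ → ℝ → ℝ → ℝ)
    (hV : ContDiff ℝ 1 fun p : ℝ × ℝ × ℝ => V p.1 p.2.1 p.2.2)
    (hsand : ∀ τ ≥ τ₁, ∀ ρ φ : ℝ, W0 Q lam0 N L ρ φ τ₁ ≤ Δ₁ ^ 2 →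
      (1 - ε) * W0 Q lam0 N L ρ φ τ ≤ V ρ φ τ ∧ V ρ φ τ ≤ (1 + ε) * W0 Q lam0 N L ρ φ τ)
    (hdecay : ∀ τ ≥ τ₁, ∀ ρ φ : ℝ, W0 Q lam0 N L ρ φ τ₁ ≤ Δ₁ ^ 2 →
      DV N M A B V ρ φ τ ≤ -κ * τ⁻¹ * V ρ φ τ) :
    ∃ δ : ℝ, 0 < δ ∧ δ < Δ₁ ∧
      ∀ ρ φ : ℝ → ℝ, IsSolution N M A B τ₁ ρ φ →
        W0 Q lam0 N L (ρ τ₁) (φ τ₁) τ₁ ≤ δ ^ 2 →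
        (∀ τ ≥ τ₁, W0 Q lam0 N L (ρ τ) (φ τ) τ₁ ≤ Δ₁ ^ 2) ∧
        (∀ τ ≥ τ₁, W0 Q lam0 N L (ρ τ) (φ τ) τ₁ ≤
          ((1 + ε) / (1 - ε)) * δ ^ 2 * (τ / τ₁) ^ ((L : ℝ) / (N : ℝ) - κ)) ∧
        Filter.Tendsto (fun τ => (ρ τ, φ τ)) Filter.atTop (nhds (0, 0)) := by
  obtain ⟨hε0, hε1⟩ := hε
  have h1ε : (0:ℝ) < 1 - ε := by linarith
  have h1ε' : (0:ℝ) < 1 + ε := by linarith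
  have hτ₁0 : (0:ℝ) < τ₁ := by linarith
  have hN0 : (0:ℝ) < (N:ℝ) := by exact_mod_cast hN
  have he0 : 0 ≤ (L:ℝ)/(N:ℝ) := by positivity
  have hκ0 : (0:ℝ) < κ := lt_of_le_of_lt he0 hκ
  have hfrac : (0:ℝ) < (1-ε)/(2*(1+ε)) := by positivity
  set δ : ℝ := Δ₁ * Real.sqrt ((1-ε)/(2*(1+ε))) with hδdef
  have hδ0 : 0 < δ := mul_pos hΔ₁ (Real.sqrt_pos.2 hfrac)
  have hδsq : δ^2 = Δ₁^2 * ((1-ε)/(2*(1+ε))) := by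
    rw [hδdef, mul_pow, Real.sq_sqrt hfrac.le]
  have hCδ : (1+ε)/(1-ε) * δ^2 = Δ₁^2/2 := by
    rw [hδsq]; field_simp
  have hfrac1 : (1-ε)/(2*(1+ε)) < 1 := by
    rw [div_lt_one (by positivity)]; linarith
  have hδsqlt : δ^2 < Δ₁^2 := by
    rw [hδsq]
    calc Δ₁^2 * ((1-ε)/(2*(1+ε))) < Δ₁^2 * 1 :=
          mul_lt_mul_of_pos_left hfrac1 (pow_pos hΔ₁ 2)
      _ = Δ₁^2 := mul_one _
  have hδΔ : δ < Δ₁ := by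
    by_contra h
    push_neg at h
    exact absurd (pow_le_pow_left₀ hΔ₁.le h 2) (not_le.2 hδsqlt)
  refine ⟨δ, hδ0, hδΔ, ?_⟩
  intro ρ φ hsol hinit
  -- nonnegativity of W0
  have hW0nn : ∀ r p t : ℝ, 0 < t → 0 ≤ W0 Q lam0 N L r p t := by
    intro r p t ht
    unfold W0
    positivity
  -- continuity of t ↦ W0(ρ t, φ t, τ₁)
  have hgc : ∀ t, τ₁ ≤ t → ContinuousAt (fun u => W0 Q lam0 N L (ρ u) (φ u) τ₁) t := by
    intro t ht
    have hρc := (hsol t ht).1.continuousAt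
    have hφc := (hsol t ht).2.continuousAt
    unfold W0
    exact ((continuousAt_const.mul (hρc.pow 2)).add
      (continuousAt_const.mul (hφc.pow 2))).div_const 2
  -- derivative of E along the solution
  have hE : ∀ s, τ₁ ≤ s →
      HasDerivAt (fun u => V (ρ u) (φ u) u) (DV N M A B V (ρ s) (φ s) s) s := by
    intro s hs
    have h := hasDerivAt_comp3 V hV ρ φ s _ _ (hsol s hs).1 (hsol s hs).2
    convert h using 1
    unfold DV
    ring
  -- KEY LEMMA
  have key : ∀ t, τ₁ ≤ t →
      (∀ s, τ₁ ≤ s → s ≤ t → W0 Q lam0 N L (ρ s) (φ s) τ₁ ≤ Δ₁^2) →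
      W0 Q lam0 N L (ρ t) (φ t) τ₁ ≤
        (1+ε)/(1-ε) * δ^2 * (t/τ₁) ^ ((L:ℝ)/(N:ℝ) - κ) := by
    intro t ht hreg
    have ht0 : 0 < t := lt_of_lt_of_le hτ₁0 ht
    set E : ℝ → ℝ := fun u => V (ρ u) (φ u) u with hEdef
    set H : ℝ → ℝ := fun u => E u * u ^ κ with hHdef
    have hH : ∀ s, τ₁ ≤ s → HasDerivAt H
        (DV N M A B V (ρ s) (φ s) s * s ^ κ + E s * (κ * s ^ (κ-1))) s := by
      intro s hs
      have hs0 : (0:ℝ) < s := lt_of_lt_of_le hτ₁0 hs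
      exact (hE s hs).mul (Real.hasDerivAt_rpow_const (Or.inl hs0.ne'))
    have hH0 : ∀ s, τ₁ ≤ s → s ≤ t →
        DV N M A B V (ρ s) (φ s) s * s ^ κ + E s * (κ * s ^ (κ-1)) ≤ 0 := by
      intro s hs1 hs2
      have hs0 : (0:ℝ) < s := lt_of_lt_of_le hτ₁0 hs1
      have hdv := hdecay s hs1 (ρ s) (φ s) (hreg s hs1 hs2)
      have hpow : (0:ℝ) < s ^ κ := Real.rpow_pos_of_pos hs0 κ
      have h1 : DV N M A B V (ρ s) (φ s) s * s ^ κ ≤ (-κ * s⁻¹ * E s) * s ^ κ :=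
        mul_le_mul_of_nonneg_right hdv hpow.le
      have h2 : s⁻¹ * s ^ κ = s ^ (κ - 1) := by
        rw [Real.rpow_sub hs0, Real.rpow_one]
        field_simp
      have heq : (-κ * s⁻¹ * E s) * s ^ κ + E s * (κ * s ^ (κ-1)) = 0 := by
        rw [← h2]; ring
      linarith
    have hHt : H t ≤ H τ₁ := by
      rcases eq_or_lt_of_le ht with h | hlt
      · rw [← h]
      · have hanti : AntitoneOn H (Set.Icc τ₁ t) := by
          apply antitoneOn_of_deriv_nonpos (convex_Icc τ₁ t)
          · intro s hs
            exact ((hH s hs.1).continuousAt).continuousWithinAt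
          · intro s hs
            rw [interior_Icc] at hs
            exact (hH s hs.1.le).differentiableAt.differentiableWithinAt
          · intro s hs
            rw [interior_Icc] at hs
            rw [(hH s hs.1.le).deriv]
            exact hH0 s hs.1.le hs.2.le
        exact hanti (Set.left_mem_Icc.2 ht) (Set.right_mem_Icc.2 ht) ht
    have hgτ₁ : W0 Q lam0 N L (ρ τ₁) (φ τ₁) τ₁ ≤ Δ₁^2 := hreg τ₁ le_rfl ht
    have hEτ₁ : E τ₁ ≤ (1+ε) * δ^2 := by
      have h := (hsand τ₁ le_rfl (ρ τ₁) (φ τ₁) hgτ₁).2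
      have h2 : (1+ε) * W0 Q lam0 N L (ρ τ₁) (φ τ₁) τ₁ ≤ (1+ε) * δ^2 :=
        mul_le_mul_of_nonneg_left hinit h1ε'.le
      exact le_trans h h2
    have hWt : (1-ε) * W0 Q lam0 N L (ρ t) (φ t) t ≤ E t :=
      (hsand t ht (ρ t) (φ t) (hreg t ht le_rfl)).1
    set r : ℝ := t / τ₁ with hrdef
    have hr0 : 0 < r := div_pos ht0 hτ₁0
    have hr1 : 1 ≤ r := (one_le_div hτ₁0).2 ht
    have hP1 : 1 ≤ r ^ ((L:ℝ)/(N:ℝ)) := Real.one_le_rpow hr1 he0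
    have hP0 : 0 ≤ r ^ ((L:ℝ)/(N:ℝ)) := by positivity
    -- step 1 : W0 at τ₁ ≤ r^{L/N} W0 at t
    have hstep1 : W0 Q lam0 N L (ρ t) (φ t) τ₁ ≤
        r ^ ((L:ℝ)/(N:ℝ)) * W0 Q lam0 N L (ρ t) (φ t) t := by
      unfold W0
      have hc : τ₁ ^ (-(L:ℝ)/(N:ℝ)) = r ^ ((L:ℝ)/(N:ℝ)) * t ^ (-(L:ℝ)/(N:ℝ)) := by
        have hne : -(L:ℝ)/(N:ℝ) = -((L:ℝ)/(N:ℝ)) := by ring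
        rw [hne, Real.rpow_neg ht0.le, Real.rpow_neg hτ₁0.le, hrdef,
          Real.div_rpow ht0.le hτ₁0.le]
        have htp : (0:ℝ) < t ^ ((L:ℝ)/(N:ℝ)) := Real.rpow_pos_of_pos ht0 _
        field_simp
      rw [hc]
      have hQ2 : Q * ρ t ^ 2 ≤ r ^ ((L:ℝ)/(N:ℝ)) * (Q * ρ t ^ 2) :=
        le_mul_of_one_le_left (by positivity) hP1
      nlinarith [hQ2]
    -- step 2 : E t ≤ E τ₁ * r^{-κ}
    have hstep2 : E t ≤ E τ₁ * r ^ (-κ) := by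
      have htκ : (0:ℝ) < t ^ κ := Real.rpow_pos_of_pos ht0 κ
      have hrr : r ^ (-κ) = τ₁ ^ κ / t ^ κ := by
        rw [Real.rpow_neg hr0.le, hrdef, Real.div_rpow ht0.le hτ₁0.le, inv_div]
      rw [hrr, ← mul_div_assoc, le_div_iff₀ htκ]
      exact hHt
    have hrκ0 : 0 ≤ r ^ (-κ) := by positivity
    -- combine
    have hW0t : W0 Q lam0 N L (ρ t) (φ t) t ≤ E t / (1-ε) := by
      rw [le_div_iff₀ h1ε]
      linarith [hWt]
    calc W0 Q lam0 N L (ρ t) (φ t) τ₁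
        ≤ r ^ ((L:ℝ)/(N:ℝ)) * W0 Q lam0 N L (ρ t) (φ t) t := hstep1
      _ ≤ r ^ ((L:ℝ)/(N:ℝ)) * (E t / (1-ε)) := mul_le_mul_of_nonneg_left hW0t hP0
      _ ≤ r ^ ((L:ℝ)/(N:ℝ)) * ((E τ₁ * r ^ (-κ)) / (1-ε)) := by
          apply mul_le_mul_of_nonneg_left _ hP0
          exact div_le_div_of_nonneg_right hstep2 h1ε.le
      _ ≤ r ^ ((L:ℝ)/(N:ℝ)) * (((1+ε) * δ^2 * r ^ (-κ)) / (1-ε)) := by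
          apply mul_le_mul_of_nonneg_left _ hP0
          exact div_le_div_of_nonneg_right (mul_le_mul_of_nonneg_right hEτ₁ hrκ0) h1ε.le
      _ = (1+ε)/(1-ε) * δ^2 * r ^ ((L:ℝ)/(N:ℝ) - κ) := by
          rw [show (L:ℝ)/(N:ℝ) - κ = (L:ℝ)/(N:ℝ) + (-κ) by ring, Real.rpow_add hr0]
          field_simp
  -- INVARIANCE
  have hreg_all : ∀ t, τ₁ ≤ t → W0 Q lam0 N L (ρ t) (φ t) τ₁ ≤ Δ₁^2 := by
    by_contra hcon
    push_neg at hcon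
    obtain ⟨t₀, ht₀, hgt₀⟩ := hcon
    set S : Set ℝ := {s | τ₁ ≤ s ∧ Δ₁^2 < W0 Q lam0 N L (ρ s) (φ s) τ₁} with hSdef
    have hSne : S.Nonempty := ⟨t₀, ht₀, hgt₀⟩
    have hSbdd : BddBelow S := ⟨τ₁, fun s hs => hs.1⟩
    set u := sInf S with hudef
    have huτ₁ : τ₁ ≤ u := le_csInf hSne (fun s hs => hs.1)
    have hbefore : ∀ s, τ₁ ≤ s → s < u → W0 Q lam0 N L (ρ s) (φ s) τ₁ ≤ Δ₁^2 := by
      intro s hs1 hs2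
      by_contra h
      push_neg at h
      exact absurd (csInf_le hSbdd ⟨hs1, h⟩) (not_le.2 hs2)
    have huW : W0 Q lam0 N L (ρ u) (φ u) τ₁ ≤ Δ₁^2 := by
      rcases eq_or_lt_of_le huτ₁ with h' | h'
      · rw [← h']
        exact le_trans hinit hδsqlt.le
      · have hc := (hgc u (le_of_lt h')).continuousWithinAt (s := Set.Ico τ₁ u)
        have hmem : u ∈ closure (Set.Ico τ₁ u) := by
          rw [closure_Ico h'.ne]
          exact Set.right_mem_Icc.2 h'.le
        have hnb : (nhdsWithin u (Set.Ico τ₁ u)).NeBot :=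
          mem_closure_iff_nhdsWithin_neBot.1 hmem
        refine le_of_tendsto hc ?_
        filter_upwards [self_mem_nhdsWithin] with w hw
        exact hbefore w hw.1 hw.2
    have hatu : ∀ s, τ₁ ≤ s → s ≤ u → W0 Q lam0 N L (ρ s) (φ s) τ₁ ≤ Δ₁^2 := by
      intro s hs1 hs2
      rcases lt_or_eq_of_le hs2 with h | h
      · exact hbefore s hs1 h
      · rw [h]
        exact huW
    have hgu : W0 Q lam0 N L (ρ u) (φ u) τ₁ < Δ₁^2 := by
      have hk := key u huτ₁ hatu
      have hrle : (u/τ₁) ^ ((L:ℝ)/(N:ℝ) - κ) ≤ 1 :=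
        Real.rpow_le_one_of_one_le_of_nonpos ((one_le_div hτ₁0).2 huτ₁) (by linarith)
      have hCnn : 0 ≤ (1+ε)/(1-ε) * δ^2 := by positivity
      have : (1+ε)/(1-ε) * δ^2 * (u/τ₁) ^ ((L:ℝ)/(N:ℝ) - κ) ≤ (1+ε)/(1-ε) * δ^2 := by
        nlinarith
      calc W0 Q lam0 N L (ρ u) (φ u) τ₁ ≤ (1+ε)/(1-ε) * δ^2 := le_trans hk this
        _ = Δ₁^2/2 := hCδ
        _ < Δ₁^2 := by nlinarith [sq_nonneg Δ₁, hΔ₁]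
    have hev := (hgc u huτ₁) (Iio_mem_nhds hgu)
    obtain ⟨η, hη0, hball⟩ := Metric.mem_nhds_iff.1 hev
    obtain ⟨s, hsS, hsu⟩ := Real.lt_sInf_add_pos hSne hη0
    have hsge : u ≤ s := csInf_le hSbdd hsS
    have hsball : s ∈ Metric.ball u η := by
      rw [Metric.mem_ball, Real.dist_eq, abs_of_nonneg (by linarith)]
      rw [← hudef] at hsu
      linarith
    have := hball hsball
    simp only [Set.mem_preimage, Set.mem_Iio] at this
    exact absurd hsS.2 (not_lt.2 this.le)
  have hbound : ∀ t, τ₁ ≤ t → W0 Q lam0 N L (ρ t) (φ t) τ₁ ≤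
      (1+ε)/(1-ε) * δ^2 * (t/τ₁) ^ ((L:ℝ)/(N:ℝ) - κ) :=
    fun t ht => key t ht (fun s h1 _ => hreg_all s h1)
  -- TENDSTO
  have htend0 : Filter.Tendsto (fun t => (1+ε)/(1-ε) * δ^2 * (t/τ₁) ^ ((L:ℝ)/(N:ℝ) - κ))
      Filter.atTop (nhds 0) := by
    have h1 : Filter.Tendsto (fun t : ℝ => t/τ₁) Filter.atTop Filter.atTop :=
      Filter.Tendsto.atTop_div_const hτ₁0 Filter.tendsto_id
    have h2 : Filter.Tendsto (fun x : ℝ => x ^ ((L:ℝ)/(N:ℝ) - κ)) Filter.atTop (nhds 0) := by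
      rw [show (L:ℝ)/(N:ℝ) - κ = -(κ - (L:ℝ)/(N:ℝ)) by ring]
      exact tendsto_rpow_neg_atTop (by linarith)
    have h3 := h2.comp h1
    have h4 := h3.const_mul ((1+ε)/(1-ε) * δ^2)
    simpa using h4
  have hWtend : Filter.Tendsto (fun t => W0 Q lam0 N L (ρ t) (φ t) τ₁)
      Filter.atTop (nhds 0) := by
    apply tendsto_of_tendsto_of_tendsto_of_le_of_le' tendsto_const_nhds htend0
    · filter_upwards [Filter.eventually_ge_atTop τ₁] with t ht
      exact hW0nn (ρ t) (φ t) τ₁ hτ₁0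
    · filter_upwards [Filter.eventually_ge_atTop τ₁] with t ht
      exact hbound t ht
  have hc0 : 0 < τ₁ ^ (-(L:ℝ)/(N:ℝ)) * lam0 :=
    mul_pos (Real.rpow_pos_of_pos hτ₁0 _) hlam0
  have hρ2 : Filter.Tendsto (fun t => (ρ t)^2) Filter.atTop (nhds 0) := by
    have h := hWtend.const_mul (2/Q)
    rw [mul_zero] at h
    apply tendsto_of_tendsto_of_tendsto_of_le_of_le' tendsto_const_nhds h
    · exact Filter.Eventually.of_forall (fun t => sq_nonneg _)
    · filter_upwards with t
      unfold W0
      rw [div_mul_eq_mul_div, le_div_iff₀ hQ]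
      nlinarith [mul_nonneg hc0.le (sq_nonneg (φ t))]
  have hφ2 : Filter.Tendsto (fun t => (φ t)^2) Filter.atTop (nhds 0) := by
    have h := hWtend.const_mul (2/(τ₁ ^ (-(L:ℝ)/(N:ℝ)) * lam0))
    rw [mul_zero] at h
    apply tendsto_of_tendsto_of_tendsto_of_le_of_le' tendsto_const_nhds h
    · exact Filter.Eventually.of_forall (fun t => sq_nonneg _)
    · filter_upwards with t
      unfold W0
      rw [div_mul_eq_mul_div, le_div_iff₀ hc0]
      nlinarith [mul_nonneg hQ.le (sq_nonneg (ρ t))]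
  have habs : ∀ f : ℝ → ℝ, Filter.Tendsto (fun t => (f t)^2) Filter.atTop (nhds 0) →
      Filter.Tendsto f Filter.atTop (nhds 0) := by
    intro f hf
    have h := (Real.continuous_sqrt.tendsto 0).comp hf
    rw [Real.sqrt_zero] at h
    have habs' : Filter.Tendsto (fun t => |f t|) Filter.atTop (nhds 0) := by
      convert h using 1
      funext t
      rw [Function.comp_apply, Real.sqrt_sq_eq_abs]
    have hneg : Filter.Tendsto (fun t => -|f t|) Filter.atTop (nhds 0) := by
      simpa using habs'.neg
    apply tendsto_of_tendsto_of_tendsto_of_le_of_le hneg habs'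
    · exact fun t => neg_abs_le _
    · exact fun t => le_abs_self _
  have hρ0 := habs ρ hρ2
  have hφ0 := habs φ hφ2
  exact ⟨fun t ht => hreg_all t ht, fun t ht => hbound t ht, hρ0.prodMk_nhds hφ0⟩
end

section
/- Let N, M, D, L be integers with N ≥ 1, 1 ≤ M ≤ D, M + D ≤ N and L ≥ 0, and let Δ₁ > 0, ε ∈ (0,1), κ > 0. Suppose V : ℝ² × [τ₁,∞) → ℝ is C¹ and for every τ ≥ τ₁ and every (ρ,φ) with W₀(ρ,φ,τ₁) ≤ Δ₁² one has (1−ε) W₀(ρ,φ,τ) ≤ V(ρ,φ,τ) ≤ (1+ε) W₀(ρ,φ,τ) and 𝒟V(ρ,φ,τ) ≥ κ τ^{−(M+D)/N} V(ρ,φ,τ). Then every solution (ρ(τ),φ(τ)) defined on all of [τ₁,∞) with 0 < W₀(ρ(τ₁),φ(τ₁),τ₁) ≤ Δ₁² leaves the region: there exists τ₃ > τ₁ with W₀(ρ(τ₃),φ(τ₃),τ₁) > Δ₁². In particular, the zero solution is unstable. -/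
open Real

/-- instability, case `γ_D > 0`: If `V` is sandwiched between `(1±ε) W₀`
and satisfies `𝒟V ≥ κ τ^{−(M+D)/N} V` on the region `{W₀(·,·,τ₁) ≤ Δ₁²}` (with
`M ≤ D`, `M + D ≤ N`, `κ > 0`), then every solution on `[τ₁,∞)` starting with
`0 < W₀(ρ(τ₁),φ(τ₁),τ₁) ≤ Δ₁²` leaves the region: there is `τ₃ > τ₁` with
`W₀(ρ(τ₃),φ(τ₃),τ₁) > Δ₁²`. In particular the zero solution is unstable. -/
theorem statement11 (Q lam0 : ℝ) (hQ : 0 < Q) (hlam0 : 0 < lam0)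
    (N M D L : ℕ) (hN : 1 ≤ N) (hM : 1 ≤ M) (hMD : M ≤ D) (hMDN : M + D ≤ N)
    (τ₁ : ℝ) (hτ₁ : 1 ≤ τ₁)
    (A B : ℝ → ℝ → ℝ → ℝ)
    (hA : Continuous fun p : ℝ × ℝ × ℝ => A p.1 p.2.1 p.2.2)
    (hB : Continuous fun p : ℝ × ℝ × ℝ => B p.1 p.2.1 p.2.2)
    (hA0 : ∀ τ ≥ τ₁, A 0 0 τ = 0) (hB0 : ∀ τ ≥ τ₁, B 0 0 τ = 0)
    (Δ₁ ε κ : ℝ) (hΔ₁ : 0 < Δ₁) (hε : ε ∈ Set.Ioo (0 : ℝ) 1) (hκ : 0 < κ)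
    (V : ℝ → ℝ → ℝ → ℝ)
    (hV : ContDiff ℝ 1 fun p : ℝ × ℝ × ℝ => V p.1 p.2.1 p.2.2)
    (hsand : ∀ τ ≥ τ₁, ∀ ρ φ : ℝ, W0 Q lam0 N L ρ φ τ₁ ≤ Δ₁ ^ 2 →
      (1 - ε) * W0 Q lam0 N L ρ φ τ ≤ V ρ φ τ ∧ V ρ φ τ ≤ (1 + ε) * W0 Q lam0 N L ρ φ τ)
    (hgrow : ∀ τ ≥ τ₁, ∀ ρ φ : ℝ, W0 Q lam0 N L ρ φ τ₁ ≤ Δ₁ ^ 2 →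
      κ * τ ^ (-((M : ℝ) + (D : ℝ)) / (N : ℝ)) * V ρ φ τ ≤ DV N M A B V ρ φ τ) :
    ∀ ρ φ : ℝ → ℝ, IsSolution N M A B τ₁ ρ φ →
      0 < W0 Q lam0 N L (ρ τ₁) (φ τ₁) τ₁ →
      W0 Q lam0 N L (ρ τ₁) (φ τ₁) τ₁ ≤ Δ₁ ^ 2 →
      ∃ τ₃ > τ₁, Δ₁ ^ 2 < W0 Q lam0 N L (ρ τ₃) (φ τ₃) τ₁ := by
  intro ρ φ hsol h0 h1
  by_contra hcon
  push_neg at hcon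
  obtain ⟨hε0, hε1⟩ := hε
  have hτ₁0 : (0:ℝ) < τ₁ := lt_of_lt_of_le one_pos hτ₁
  -- every later time stays in the region
  have hreg : ∀ τ ≥ τ₁, W0 Q lam0 N L (ρ τ) (φ τ) τ₁ ≤ Δ₁ ^ 2 := by
    intro τ hτ
    rcases eq_or_lt_of_le hτ with h | h
    · rwa [← h]
    · exact hcon τ h
  -- W0 is nonnegative for positive time
  have hW0nonneg : ∀ τ : ℝ, 0 < τ → ∀ a b : ℝ, 0 ≤ W0 Q lam0 N L a b τ := by
    intro τ hτ a b
    have h1 : (0:ℝ) ≤ τ ^ (-(L : ℝ) / (N : ℝ)) := (Real.rpow_pos_of_pos hτ _).le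
    unfold W0
    positivity
  -- W0 at time τ ≥ τ₁ is at most W0 at time τ₁ (same point)
  have hW0mono : ∀ τ ≥ τ₁, ∀ a b : ℝ,
      W0 Q lam0 N L a b τ ≤ W0 Q lam0 N L a b τ₁ := by
    intro τ hτ a b
    have hrp : τ ^ (-(L : ℝ) / (N : ℝ)) ≤ τ₁ ^ (-(L : ℝ) / (N : ℝ)) := by
      apply Real.rpow_le_rpow_of_nonpos hτ₁0 hτ
      apply div_nonpos_of_nonpos_of_nonneg <;> simp
    have hb2 : (0:ℝ) ≤ lam0 * b ^ 2 := by positivity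
    unfold W0
    nlinarith
  set F : ℝ × ℝ × ℝ → ℝ := fun p => V p.1 p.2.1 p.2.2 with hF
  have hFd : Differentiable ℝ F := hV.differentiable one_ne_zero
  set v : ℝ → ℝ := fun t => V (ρ t) (φ t) t with hv
  -- derivative of v along the solution equals DV
  have hv' : ∀ τ ≥ τ₁, HasDerivAt v (DV N M A B V (ρ τ) (φ τ) τ) τ := by
    intro τ hτ
    obtain ⟨hρd, hφd⟩ := hsol τ hτ
    set a := ρ τ
    set b := φ τ
    set f := fderiv ℝ F (a, b, τ) with hf
    have hFda : HasFDerivAt F f (a, b, τ) := (hFd (a, b, τ)).hasFDerivAt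
    -- partial derivatives
    have hpτ : HasDerivAt (fun t => V a b t) (f (0, 0, 1)) τ := by
      have hc : HasDerivAt (fun t => ((a, b, t) : ℝ × ℝ × ℝ)) ((0:ℝ), (0:ℝ), (1:ℝ)) τ := by
        exact HasDerivAt.prodMk (hasDerivAt_const τ a) (HasDerivAt.prodMk (hasDerivAt_const τ b) (hasDerivAt_id τ))
      exact hFda.comp_hasDerivAt τ hc
    have hpρ : HasDerivAt (fun r => V r b τ) (f (1, 0, 0)) a := by
      have hc : HasDerivAt (fun r => ((r, b, τ) : ℝ × ℝ × ℝ)) ((1:ℝ), (0:ℝ), (0:ℝ)) a := by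
        exact HasDerivAt.prodMk (hasDerivAt_id a) (HasDerivAt.prodMk (hasDerivAt_const a b) (hasDerivAt_const a τ))
      exact hFda.comp_hasDerivAt a hc
    have hpφ : HasDerivAt (fun p => V a p τ) (f (0, 1, 0)) b := by
      have hc : HasDerivAt (fun p => ((a, p, τ) : ℝ × ℝ × ℝ)) ((0:ℝ), (1:ℝ), (0:ℝ)) b := by
        exact HasDerivAt.prodMk (hasDerivAt_const b a) (HasDerivAt.prodMk (hasDerivAt_id b) (hasDerivAt_const b τ))
      exact hFda.comp_hasDerivAt b hc
    set ρ' := τ ^ (-(M : ℝ) / (N : ℝ)) * A a b τ with hρ'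
    set φ' := τ ^ (-(M : ℝ) / (N : ℝ)) * B a b τ with hφ'
    have hc : HasDerivAt (fun t => ((ρ t, φ t, t) : ℝ × ℝ × ℝ)) (ρ', φ', (1:ℝ)) τ :=
      HasDerivAt.prodMk hρd (HasDerivAt.prodMk hφd (hasDerivAt_id τ))
    have hvc : HasDerivAt v (f (ρ', φ', 1)) τ := by
      have h := hFda.comp_hasDerivAt τ hc
      exact h
    have hdec : ((ρ', φ', (1:ℝ)) : ℝ × ℝ × ℝ)
        = ρ' • ((1:ℝ), (0:ℝ), (0:ℝ)) + φ' • ((0:ℝ), (1:ℝ), (0:ℝ)) + ((0:ℝ), (0:ℝ), (1:ℝ)) := by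
      simp [Prod.ext_iff]
    have hlin : f (ρ', φ', 1) = ρ' * f (1, 0, 0) + φ' * f (0, 1, 0) + f (0, 0, 1) := by
      rw [hdec, map_add, map_add, map_smul, map_smul]
      simp [smul_eq_mul]
    have hDV : DV N M A B V a b τ = f (ρ', φ', 1) := by
      rw [hlin, DV, hpτ.deriv, hpρ.deriv, hpφ.deriv, hρ', hφ']
      ring
    rw [hDV]
    exact hvc
  -- growth inequality along the solution
  have hvlb : ∀ τ ≥ τ₁,
      κ * τ ^ (-((M : ℝ) + (D : ℝ)) / (N : ℝ)) * v τ ≤ DV N M A B V (ρ τ) (φ τ) τ :=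
    fun τ hτ => hgrow τ hτ (ρ τ) (φ τ) (hreg τ hτ)
  -- v is nonnegative, positive at τ₁
  have hvnonneg : ∀ τ ≥ τ₁, 0 ≤ v τ := by
    intro τ hτ
    have := (hsand τ hτ (ρ τ) (φ τ) (hreg τ hτ)).1
    have hW := hW0nonneg τ (lt_of_lt_of_le hτ₁0 hτ) (ρ τ) (φ τ)
    nlinarith
  have hvpos : 0 < v τ₁ := by
    have := (hsand τ₁ le_rfl (ρ τ₁) (φ τ₁) h1).1
    nlinarith
  -- the comparison function g = v * τ^(-κ) is monotone on [τ₁, ∞)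
  set g : ℝ → ℝ := fun t => v t * t ^ (-κ) with hg
  have hgd : ∀ τ ≥ τ₁, HasDerivAt g
      (DV N M A B V (ρ τ) (φ τ) τ * τ ^ (-κ) + v τ * (-κ * τ ^ (-κ - 1))) τ := by
    intro τ hτ
    have hτ0 : (0:ℝ) < τ := lt_of_lt_of_le hτ₁0 hτ
    exact (hv' τ hτ).mul (Real.hasDerivAt_rpow_const (Or.inl hτ0.ne'))
  have hgderiv_nonneg : ∀ τ ≥ τ₁,
      0 ≤ DV N M A B V (ρ τ) (φ τ) τ * τ ^ (-κ) + v τ * (-κ * τ ^ (-κ - 1)) := by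
    intro τ hτ
    have hτ0 : (0:ℝ) < τ := lt_of_lt_of_le hτ₁0 hτ
    have hτ1 : (1:ℝ) ≤ τ := le_trans hτ₁ hτ
    have hs : τ ^ (-(1:ℝ)) ≤ τ ^ (-((M : ℝ) + (D : ℝ)) / (N : ℝ)) := by
      apply Real.rpow_le_rpow_of_exponent_le hτ1
      have hNpos : (0:ℝ) < (N:ℝ) := by exact_mod_cast Nat.lt_of_lt_of_le Nat.zero_lt_one hN
      rw [le_div_iff₀ hNpos]
      have : (M : ℝ) + (D : ℝ) ≤ (N : ℝ) := by exact_mod_cast hMDN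
      nlinarith
    have hvn : 0 ≤ v τ := hvnonneg τ hτ
    have hDVlb : κ * τ ^ (-(1:ℝ)) * v τ ≤ DV N M A B V (ρ τ) (φ τ) τ := by
      refine le_trans ?_ (hvlb τ hτ)
      have := mul_le_mul_of_nonneg_right (mul_le_mul_of_nonneg_left hs hκ.le) hvn
      linarith
    have hrκ : (0:ℝ) < τ ^ (-κ) := Real.rpow_pos_of_pos hτ0 _
    have hsplit : τ ^ (-κ - 1) = τ ^ (-κ) * τ ^ (-(1:ℝ)) := by
      rw [← Real.rpow_add hτ0]; ring_nf
    rw [hsplit]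
    nlinarith [mul_le_mul_of_nonneg_right hDVlb hrκ.le]
  have hgmono : MonotoneOn g (Set.Ici τ₁) := by
    apply monotoneOn_of_deriv_nonneg (convex_Ici τ₁)
    · intro τ hτ
      exact ((hgd τ hτ).continuousAt).continuousWithinAt
    · intro τ hτ
      rw [interior_Ici] at hτ
      exact ((hgd τ (le_of_lt hτ)).differentiableAt).differentiableWithinAt
    · intro τ hτ
      rw [interior_Ici] at hτ
      rw [(hgd τ (le_of_lt hτ)).deriv]
      exact hgderiv_nonneg τ (le_of_lt hτ)
  -- lower bound: v τ ≥ (v τ₁ * τ₁^(-κ)) * τ^κ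
  have hlow : ∀ τ ≥ τ₁, v τ₁ * τ₁ ^ (-κ) * τ ^ κ ≤ v τ := by
    intro τ hτ
    have hτ0 : (0:ℝ) < τ := lt_of_lt_of_le hτ₁0 hτ
    have := hgmono (Set.self_mem_Ici) (Set.mem_Ici.mpr hτ) hτ
    have hκτ : (0:ℝ) < τ ^ (-κ) := Real.rpow_pos_of_pos hτ0 _
    have hmulpos : τ ^ (-κ) * τ ^ κ = 1 := by
      rw [← Real.rpow_add hτ0]; simp
    have h2 : v τ₁ * τ₁ ^ (-κ) * τ ^ κ ≤ v τ * τ ^ (-κ) * τ ^ κ := by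
      apply mul_le_mul_of_nonneg_right _ (Real.rpow_pos_of_pos hτ0 κ).le
      exact this
    calc v τ₁ * τ₁ ^ (-κ) * τ ^ κ ≤ v τ * τ ^ (-κ) * τ ^ κ := h2
      _ = v τ * (τ ^ (-κ) * τ ^ κ) := by ring
      _ = v τ := by rw [hmulpos, mul_one]
  -- upper bound: v τ ≤ (1+ε) Δ₁²
  have hup : ∀ τ ≥ τ₁, v τ ≤ (1 + ε) * Δ₁ ^ 2 := by
    intro τ hτ
    have h2 := (hsand τ hτ (ρ τ) (φ τ) (hreg τ hτ)).2
    have h3 : W0 Q lam0 N L (ρ τ) (φ τ) τ ≤ Δ₁ ^ 2 :=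
      le_trans (hW0mono τ hτ (ρ τ) (φ τ)) (hreg τ hτ)
    nlinarith
  -- derive contradiction from unbounded growth
  have hc0 : (0:ℝ) < v τ₁ * τ₁ ^ (-κ) := mul_pos hvpos (Real.rpow_pos_of_pos hτ₁0 _)
  have htend : Filter.Tendsto (fun τ : ℝ => v τ₁ * τ₁ ^ (-κ) * τ ^ κ) Filter.atTop Filter.atTop :=
    Filter.Tendsto.const_mul_atTop hc0 (tendsto_rpow_atTop hκ)
  obtain ⟨τ₂, hτ₂⟩ := ((htend.eventually_gt_atTop ((1 + ε) * Δ₁ ^ 2)).and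
    (Filter.eventually_ge_atTop τ₁)).exists
  have := hlow τ₂ hτ₂.2
  have := hup τ₂ hτ₂.2
  linarith [hτ₂.1]
end

section
/- Let N ≥ 1, M ≥ 1 and L ≥ 1 be integers, and let Δ₁ > 0, ε ∈ (0,1). Suppose V : ℝ² × [τ₁,∞) → ℝ is C¹ and for every τ ≥ τ₁ and every (ρ,φ) with W₀(ρ,φ,τ₁) ≤ Δ₁² one has (1−ε) W₀(ρ,φ,τ) ≤ V(ρ,φ,τ) ≤ (1+ε) W₀(ρ,φ,τ) and 𝒟V(ρ,φ,τ) ≤ 0. For δ ∈ (0,Δ₁) set Δ_δ = δ ((1−ε)/(1+ε))^{1/2} τ₁^{−L/(2N)} and Γ_δ = (Δ₁/δ)^{2N/L}. Then every solution (ρ(τ),φ(τ)) with W₀(ρ(τ₁),φ(τ₁),τ₁) ≤ Δ_δ² satisfies, for all τ ∈ [τ₁, Γ_δ τ₁]: W₀(ρ(τ),φ(τ),τ₁) ≤ Δ₁² and W₀(ρ(τ),φ(τ),τ/τ₁) ≤ δ². Since Γ_δ → ∞ as δ → 0, the zero solution is stable on a finite but asymptotically long time interval. -/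
open Real

lemma hasDerivAt_DV (N M : ℕ) (A B V : ℝ → ℝ → ℝ → ℝ)
    (hV : ContDiff ℝ 1 fun p : ℝ × ℝ × ℝ => V p.1 p.2.1 p.2.2)
    (ρ φ : ℝ → ℝ) (t : ℝ)
    (hρ : HasDerivAt ρ (t ^ (-(M : ℝ) / (N : ℝ)) * A (ρ t) (φ t) t) t)
    (hφ : HasDerivAt φ (t ^ (-(M : ℝ) / (N : ℝ)) * B (ρ t) (φ t) t) t) :
    HasDerivAt (fun s => V (ρ s) (φ s) s) (DV N M A B V (ρ t) (φ t) t) t := by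
  set F : ℝ × ℝ × ℝ → ℝ := fun p => V p.1 p.2.1 p.2.2 with hF
  have hFd : HasFDerivAt F (fderiv ℝ F (ρ t, φ t, t)) (ρ t, φ t, t) :=
    (hV.differentiable one_ne_zero (ρ t, φ t, t)).hasFDerivAt
  set p : ℝ × ℝ × ℝ := (ρ t, φ t, t) with hp
  have h1 : HasDerivAt (fun r => V r (φ t) t) (fderiv ℝ F p ((1:ℝ),(0:ℝ),(0:ℝ))) (ρ t) := by
    have h := hFd.comp_hasDerivAt (ρ t) (HasDerivAt.prodMk (hasDerivAt_id (ρ t))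
      (HasDerivAt.prodMk (hasDerivAt_const _ (φ t)) (hasDerivAt_const _ t)))
    exact h
  have h2 : HasDerivAt (fun y => V (ρ t) y t) (fderiv ℝ F p ((0:ℝ),(1:ℝ),(0:ℝ))) (φ t) := by
    have h := hFd.comp_hasDerivAt (φ t) (HasDerivAt.prodMk (hasDerivAt_const _ (ρ t))
      (HasDerivAt.prodMk (hasDerivAt_id (φ t)) (hasDerivAt_const _ t)))
    exact h
  have h3 : HasDerivAt (fun z => V (ρ t) (φ t) z) (fderiv ℝ F p ((0:ℝ),(0:ℝ),(1:ℝ))) t := by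
    have h := hFd.comp_hasDerivAt t (HasDerivAt.prodMk (hasDerivAt_const _ (ρ t))
      (HasDerivAt.prodMk (hasDerivAt_const _ (φ t)) (hasDerivAt_id t)))
    exact h
  have hexp : ∀ x y z : ℝ, fderiv ℝ F p (x, y, z) =
      x * fderiv ℝ F p ((1:ℝ),(0:ℝ),(0:ℝ)) + y * fderiv ℝ F p ((0:ℝ),(1:ℝ),(0:ℝ))
        + z * fderiv ℝ F p ((0:ℝ),(0:ℝ),(1:ℝ)) := by
    intro x y z
    have hv : (x, y, z) = x • ((1:ℝ),(0:ℝ),(0:ℝ)) + y • ((0:ℝ),(1:ℝ),(0:ℝ))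
        + z • ((0:ℝ),(0:ℝ),(1:ℝ)) := by
      simp [Prod.ext_iff]
    rw [hv, map_add, map_add, map_smul, map_smul, map_smul, smul_eq_mul, smul_eq_mul, smul_eq_mul]
  have hc : HasDerivAt (fun s => ((ρ s, φ s, s) : ℝ × ℝ × ℝ))
      ((t ^ (-(M : ℝ) / (N : ℝ)) * A (ρ t) (φ t) t,
        t ^ (-(M : ℝ) / (N : ℝ)) * B (ρ t) (φ t) t, (1:ℝ))) t :=
    HasDerivAt.prodMk hρ (HasDerivAt.prodMk hφ (hasDerivAt_id t))
  have htot := hFd.comp_hasDerivAt t hc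
  have heq : DV N M A B V (ρ t) (φ t) t =
      fderiv ℝ F p (t ^ (-(M : ℝ) / (N : ℝ)) * A (ρ t) (φ t) t,
        t ^ (-(M : ℝ) / (N : ℝ)) * B (ρ t) (φ t) t, (1:ℝ)) := by
    rw [DV, h1.deriv, h2.deriv, h3.deriv,
      hexp (t ^ (-(M : ℝ) / (N : ℝ)) * A (ρ t) (φ t) t)
        (t ^ (-(M : ℝ) / (N : ℝ)) * B (ρ t) (φ t) t) 1]
    ring
  rw [heq]
  exact htot

lemma W0_tau1_le (Q lam0 : ℝ) (hQ : 0 < Q) (hlam0 : 0 < lam0) (N L : ℕ)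
    (hN : 1 ≤ N) (hL : 1 ≤ L) (τ₁ t : ℝ) (hτ₁ : 1 ≤ τ₁) (ht : τ₁ ≤ t) (a b : ℝ) :
    W0 Q lam0 N L a b τ₁ ≤ (t / τ₁) ^ ((L : ℝ) / (N : ℝ)) * W0 Q lam0 N L a b t := by
  have hτ₁0 : (0:ℝ) < τ₁ := lt_of_lt_of_le one_pos hτ₁
  have ht0 : (0:ℝ) < t := lt_of_lt_of_le hτ₁0 ht
  have hq : (t / τ₁) ^ ((L : ℝ) / (N : ℝ)) * t ^ (-(L : ℝ) / (N : ℝ)) =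
      τ₁ ^ (-(L : ℝ) / (N : ℝ)) := by
    rw [Real.div_rpow ht0.le hτ₁0.le, div_mul_eq_mul_div, ← Real.rpow_add ht0]
    rw [show (L : ℝ) / (N : ℝ) + -(L : ℝ) / (N : ℝ) = 0 by ring, Real.rpow_zero]
    rw [show -(L:ℝ)/(N:ℝ) = -((L:ℝ)/(N:ℝ)) by ring, Real.rpow_neg hτ₁0.le, one_div]
  have hone : (1:ℝ) ≤ (t / τ₁) ^ ((L : ℝ) / (N : ℝ)) :=
    Real.one_le_rpow ((one_le_div hτ₁0).mpr ht) (by positivity)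
  have hexp : (t / τ₁) ^ ((L : ℝ) / (N : ℝ)) * W0 Q lam0 N L a b t =
      ((t / τ₁) ^ ((L : ℝ) / (N : ℝ)) * (Q * a ^ 2)
        + τ₁ ^ (-(L : ℝ) / (N : ℝ)) * lam0 * b ^ 2) / 2 := by
    rw [← hq, W0]; ring
  rw [hexp, W0]
  have h1 : Q * a ^ 2 ≤ (t / τ₁) ^ ((L : ℝ) / (N : ℝ)) * (Q * a ^ 2) := by
    nlinarith [mul_nonneg hQ.le (sq_nonneg a)]
  linarith

lemma W0_div_le (Q lam0 : ℝ) (hQ : 0 < Q) (hlam0 : 0 < lam0) (N L : ℕ)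
    (hN : 1 ≤ N) (hL : 1 ≤ L) (τ₁ t : ℝ) (hτ₁ : 1 ≤ τ₁) (ht : τ₁ ≤ t) (a b : ℝ) :
    W0 Q lam0 N L a b (t / τ₁) ≤ τ₁ ^ ((L : ℝ) / (N : ℝ)) * W0 Q lam0 N L a b t := by
  have hτ₁0 : (0:ℝ) < τ₁ := lt_of_lt_of_le one_pos hτ₁
  have ht0 : (0:ℝ) < t := lt_of_lt_of_le hτ₁0 ht
  have hq : τ₁ ^ ((L : ℝ) / (N : ℝ)) * t ^ (-(L : ℝ) / (N : ℝ)) =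
      (t / τ₁) ^ (-(L : ℝ) / (N : ℝ)) := by
    rw [Real.div_rpow ht0.le hτ₁0.le,
      show -(L:ℝ)/(N:ℝ) = -((L:ℝ)/(N:ℝ)) by ring, Real.rpow_neg hτ₁0.le,
      Real.rpow_neg ht0.le]
    field_simp
  have hone : (1:ℝ) ≤ τ₁ ^ ((L : ℝ) / (N : ℝ)) :=
    Real.one_le_rpow hτ₁ (by positivity)
  have hexp : τ₁ ^ ((L : ℝ) / (N : ℝ)) * W0 Q lam0 N L a b t =
      (τ₁ ^ ((L : ℝ) / (N : ℝ)) * (Q * a ^ 2)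
        + (t / τ₁) ^ (-(L : ℝ) / (N : ℝ)) * lam0 * b ^ 2) / 2 := by
    rw [← hq, W0]; ring
  rw [hexp, W0]
  have h1 : Q * a ^ 2 ≤ τ₁ ^ ((L : ℝ) / (N : ℝ)) * (Q * a ^ 2) := by
    nlinarith [mul_nonneg hQ.le (sq_nonneg a)]
  linarith

set_option maxHeartbeats 1000000 in
/-- stability on a finite but asymptotically long time interval, case
`γ_D < 0`, `M + D ≥ N`, `L > 0`: If `V` is sandwiched between `(1±ε) W₀` and `𝒟V ≤ 0`
on the region `{W₀(·,·,τ₁) ≤ Δ₁²}`, then for every `δ ∈ (0,Δ₁)`, setting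
`Δ_δ = δ ((1−ε)/(1+ε))^{1/2} τ₁^{−L/(2N)}` and `Γ_δ = (Δ₁/δ)^{2N/L}`, every solution with
`W₀(ρ(τ₁),φ(τ₁),τ₁) ≤ Δ_δ²` satisfies `W₀(ρ(τ),φ(τ),τ₁) ≤ Δ₁²` and
`W₀(ρ(τ),φ(τ),τ/τ₁) ≤ δ²` for all `τ ∈ [τ₁, Γ_δ τ₁]`. -/
theorem statement12 (Q lam0 : ℝ) (hQ : 0 < Q) (hlam0 : 0 < lam0)
    (N M L : ℕ) (hN : 1 ≤ N) (hM : 1 ≤ M) (hL : 1 ≤ L)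
    (τ₁ : ℝ) (hτ₁ : 1 ≤ τ₁)
    (A B : ℝ → ℝ → ℝ → ℝ)
    (hA : Continuous fun p : ℝ × ℝ × ℝ => A p.1 p.2.1 p.2.2)
    (hB : Continuous fun p : ℝ × ℝ × ℝ => B p.1 p.2.1 p.2.2)
    (hA0 : ∀ τ ≥ τ₁, A 0 0 τ = 0) (hB0 : ∀ τ ≥ τ₁, B 0 0 τ = 0)
    (Δ₁ ε : ℝ) (hΔ₁ : 0 < Δ₁) (hε : ε ∈ Set.Ioo (0 : ℝ) 1)
    (V : ℝ → ℝ → ℝ → ℝ)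
    (hV : ContDiff ℝ 1 fun p : ℝ × ℝ × ℝ => V p.1 p.2.1 p.2.2)
    (hsand : ∀ τ ≥ τ₁, ∀ ρ φ : ℝ, W0 Q lam0 N L ρ φ τ₁ ≤ Δ₁ ^ 2 →
      (1 - ε) * W0 Q lam0 N L ρ φ τ ≤ V ρ φ τ ∧ V ρ φ τ ≤ (1 + ε) * W0 Q lam0 N L ρ φ τ)
    (hdecay : ∀ τ ≥ τ₁, ∀ ρ φ : ℝ, W0 Q lam0 N L ρ φ τ₁ ≤ Δ₁ ^ 2 →
      DV N M A B V ρ φ τ ≤ 0) :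
    ∀ δ : ℝ, 0 < δ → δ < Δ₁ →
      ∀ ρ φ : ℝ → ℝ, IsSolution N M A B τ₁ ρ φ →
        W0 Q lam0 N L (ρ τ₁) (φ τ₁) τ₁ ≤
          (δ * Real.sqrt ((1 - ε) / (1 + ε)) * τ₁ ^ (-(L : ℝ) / (2 * (N : ℝ)))) ^ 2 →
        ∀ τ : ℝ, τ₁ ≤ τ → τ ≤ (Δ₁ / δ) ^ (2 * (N : ℝ) / (L : ℝ)) * τ₁ →
          W0 Q lam0 N L (ρ τ) (φ τ) τ₁ ≤ Δ₁ ^ 2 ∧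
          W0 Q lam0 N L (ρ τ) (φ τ) (τ / τ₁) ≤ δ ^ 2 := by
  obtain ⟨hε0, hε1⟩ := hε
  intro δ hδ hδΔ ρ φ hsol hinit τ hτl hτu
  have hτ₁0 : (0:ℝ) < τ₁ := lt_of_lt_of_le one_pos hτ₁
  have hNpos : (0:ℝ) < (N:ℝ) := by exact_mod_cast Nat.lt_of_lt_of_le Nat.zero_lt_one hN
  have hLpos : (0:ℝ) < (L:ℝ) := by exact_mod_cast Nat.lt_of_lt_of_le Nat.zero_lt_one hL
  have h1ε : (0:ℝ) < 1 - ε := by linarith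
  have h1ε' : (0:ℝ) < 1 + ε := by linarith
  have hepos : 0 < (L:ℝ)/(N:ℝ) := div_pos hLpos hNpos
  -- rewrite the initial bound
  have hinit' : W0 Q lam0 N L (ρ τ₁) (φ τ₁) τ₁ ≤
      δ^2 * ((1-ε)/(1+ε)) * τ₁ ^ (-(L:ℝ)/(N:ℝ)) := by
    refine hinit.trans_eq ?_
    rw [mul_pow, mul_pow, Real.sq_sqrt (by positivity)]
    rw [show (-(L:ℝ)/(2*(N:ℝ))) = (-(L:ℝ)/(N:ℝ))/2 by ring]
    rw [sq (τ₁ ^ ((-(L:ℝ)/(N:ℝ))/2)), ← Real.rpow_add hτ₁0]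
    rw [show (-(L:ℝ)/(N:ℝ))/2 + (-(L:ℝ)/(N:ℝ))/2 = -(L:ℝ)/(N:ℝ) by ring]
  have hτr1 : τ₁ ^ (-(L:ℝ)/(N:ℝ)) ≤ 1 :=
    Real.rpow_le_one_of_one_le_of_nonpos hτ₁ (by rw [neg_div]; linarith [hepos])
  have hτrpos : 0 < τ₁ ^ (-(L:ℝ)/(N:ℝ)) := Real.rpow_pos_of_pos hτ₁0 _
  set f : ℝ → ℝ := fun s => W0 Q lam0 N L (ρ s) (φ s) τ₁ with hf
  have hfcont : ∀ s, τ₁ ≤ s → ContinuousAt f s := by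
    intro s hs
    have h1 := (hsol s hs).1.continuousAt
    have h2 := (hsol s hs).2.continuousAt
    simp only [hf, W0]
    exact ((continuousAt_const.mul (h1.pow 2)).add
      (continuousAt_const.mul (h2.pow 2))).div_const 2
  have hratio0 : (0:ℝ) ≤ (1-ε)/(1+ε) := by positivity
  have hratio1 : (1-ε)/(1+ε) ≤ 1 := by rw [div_le_one h1ε']; linarith
  have hfτ₁ : f τ₁ ≤ Δ₁ ^ 2 := by
    have hδ2 : δ^2 ≤ Δ₁^2 := by nlinarith
    have hb : δ^2 * ((1-ε)/(1+ε)) * τ₁ ^ (-(L:ℝ)/(N:ℝ)) ≤ δ^2 := by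
      nlinarith [sq_nonneg δ, mul_nonneg (sq_nonneg δ) hratio0]
    exact hinit'.trans (hb.trans hδ2)
  -- key lemma: while in the region, W₀ along the solution at current time stays small
  have keyW : ∀ T', τ₁ ≤ T' → (∀ s ∈ Set.Icc τ₁ T', f s ≤ Δ₁ ^ 2) →
      ∀ t ∈ Set.Icc τ₁ T',
        W0 Q lam0 N L (ρ t) (φ t) t ≤ δ^2 * τ₁ ^ (-(L:ℝ)/(N:ℝ)) := by
    intro T' hT' hreg t ht
    have hg : ∀ s ∈ Set.Icc τ₁ T',
        HasDerivAt (fun u => V (ρ u) (φ u) u) (DV N M A B V (ρ s) (φ s) s) s :=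
      fun s hs => hasDerivAt_DV N M A B V hV ρ φ s (hsol s hs.1).1 (hsol s hs.1).2
    have hanti : AntitoneOn (fun u => V (ρ u) (φ u) u) (Set.Icc τ₁ T') := by
      apply antitoneOn_of_deriv_nonpos (convex_Icc _ _)
      · exact fun s hs => (hg s hs).continuousAt.continuousWithinAt
      · intro s hs
        rw [interior_Icc] at hs
        exact ((hg s ⟨hs.1.le, hs.2.le⟩).differentiableAt).differentiableWithinAt
      · intro s hs
        rw [interior_Icc] at hs
        rw [(hg s ⟨hs.1.le, hs.2.le⟩).deriv]
        exact hdecay s hs.1.le _ _ (hreg s ⟨hs.1.le, hs.2.le⟩)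
    have hVt : V (ρ t) (φ t) t ≤ V (ρ τ₁) (φ τ₁) τ₁ :=
      hanti (Set.left_mem_Icc.mpr hT') ht ht.1
    have h1 := (hsand t ht.1 (ρ t) (φ t) (hreg t ht)).1
    have h2 := (hsand τ₁ le_rfl (ρ τ₁) (φ τ₁) (hreg τ₁ (Set.left_mem_Icc.mpr hT'))).2
    have hchain : (1+ε) * W0 Q lam0 N L (ρ τ₁) (φ τ₁) τ₁ ≤
        (1-ε) * (δ^2 * τ₁ ^ (-(L:ℝ)/(N:ℝ))) := by
      calc (1+ε) * W0 Q lam0 N L (ρ τ₁) (φ τ₁) τ₁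
          ≤ (1+ε) * (δ^2 * ((1-ε)/(1+ε)) * τ₁ ^ (-(L:ℝ)/(N:ℝ))) :=
            mul_le_mul_of_nonneg_left hinit' h1ε'.le
        _ = (1-ε) * (δ^2 * τ₁ ^ (-(L:ℝ)/(N:ℝ))) := by field_simp
    have : (1-ε) * W0 Q lam0 N L (ρ t) (φ t) t ≤
        (1-ε) * (δ^2 * τ₁ ^ (-(L:ℝ)/(N:ℝ))) := by linarith
    exact le_of_mul_le_mul_left this h1ε
  -- comparison of (t/τ₁)^{L/N} with (Δ₁/δ)²
  have hδΔpos : 0 < Δ₁/δ := div_pos hΔ₁ hδ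
  have hGam : ((Δ₁/δ) ^ (2*(N:ℝ)/(L:ℝ))) ^ ((L:ℝ)/(N:ℝ)) = (Δ₁/δ)^2 := by
    rw [← Real.rpow_mul hδΔpos.le]
    rw [show 2*(N:ℝ)/(L:ℝ) * ((L:ℝ)/(N:ℝ)) = ((2:ℕ):ℝ) by
      field_simp; norm_num]
    rw [Real.rpow_natCast]
  have hGbound : ∀ t, τ₁ ≤ t → t ≤ (Δ₁/δ) ^ (2*(N:ℝ)/(L:ℝ)) * τ₁ →
      (t/τ₁) ^ ((L:ℝ)/(N:ℝ)) ≤ (Δ₁/δ)^2 := by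
    intro t h1 h2
    have hd : t/τ₁ ≤ (Δ₁/δ) ^ (2*(N:ℝ)/(L:ℝ)) := by
      rw [div_le_iff₀ hτ₁0]; exact h2
    calc (t/τ₁) ^ ((L:ℝ)/(N:ℝ))
        ≤ ((Δ₁/δ) ^ (2*(N:ℝ)/(L:ℝ))) ^ ((L:ℝ)/(N:ℝ)) :=
          Real.rpow_le_rpow (div_nonneg (hτ₁0.le.trans h1) hτ₁0.le) hd hepos.le
      _ = (Δ₁/δ)^2 := hGam
  have hGstrict : ∀ t, τ₁ ≤ t → t < τ → (t/τ₁) ^ ((L:ℝ)/(N:ℝ)) < (Δ₁/δ)^2 := by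
    intro t h1 h2
    have hlt : t/τ₁ < τ/τ₁ := by
      rw [div_lt_div_iff_of_pos_right hτ₁0]; exact h2
    exact lt_of_lt_of_le
      (Real.rpow_lt_rpow (div_nonneg (hτ₁0.le.trans h1) hτ₁0.le) hlt hepos)
      (by
        have := hGbound τ hτl hτu
        calc (τ/τ₁) ^ ((L:ℝ)/(N:ℝ)) ≤ (Δ₁/δ)^2 := this)
  -- bootstrap
  set S : Set ℝ := {t | t ∈ Set.Icc τ₁ τ ∧ ∀ s ∈ Set.Icc τ₁ t, f s ≤ Δ₁ ^ 2} with hS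
  have hτ₁S : τ₁ ∈ S := by
    refine ⟨Set.left_mem_Icc.mpr hτl, fun s hs => ?_⟩
    have : s = τ₁ := le_antisymm hs.2 hs.1
    rw [this]; exact hfτ₁
  have hSne : S.Nonempty := ⟨τ₁, hτ₁S⟩
  have hSbdd : BddAbove S := ⟨τ, fun t ht => ht.1.2⟩
  set t₀ : ℝ := sSup S with ht₀
  have ht₀l : τ₁ ≤ t₀ := le_csSup hSbdd hτ₁S
  have ht₀u : t₀ ≤ τ := csSup_le hSne (fun t ht => ht.1.2)
  have hlt_case : ∀ s, τ₁ ≤ s → s < t₀ → f s ≤ Δ₁ ^ 2 := by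
    intro s hs hst
    obtain ⟨u, huS, hsu⟩ := exists_lt_of_lt_csSup hSne hst
    exact huS.2 s ⟨hs, hsu.le⟩
  have hft₀ : f t₀ ≤ Δ₁ ^ 2 := by
    rcases eq_or_lt_of_le ht₀l with h' | h'
    · rw [← h']; exact hfτ₁
    · have hct : ContinuousAt f t₀ := hfcont t₀ ht₀l
      have hmem : t₀ ∈ closure (Set.Ico τ₁ t₀) := by
        rw [closure_Ico (ne_of_lt h')]; exact Set.right_mem_Icc.mpr ht₀l
      have hne : (nhdsWithin t₀ (Set.Ico τ₁ t₀)).NeBot :=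
        mem_closure_iff_nhdsWithin_neBot.mp hmem
      refine le_of_tendsto ((hct.continuousWithinAt (s := Set.Ico τ₁ t₀)).tendsto) ?_
      filter_upwards [self_mem_nhdsWithin] with x hx
      exact hlt_case x hx.1 hx.2
  have hreg₀ : ∀ s ∈ Set.Icc τ₁ t₀, f s ≤ Δ₁ ^ 2 := fun s hs =>
    (lt_or_eq_of_le hs.2).elim (hlt_case s hs.1) (fun h => h ▸ hft₀)
  have ht₀τ : t₀ = τ := by
    by_contra hne'
    have hlt : t₀ < τ := lt_of_le_of_ne ht₀u hne'
    have hWt₀ := keyW t₀ ht₀l hreg₀ t₀ (Set.right_mem_Icc.mpr ht₀l)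
    have hlow := W0_tau1_le Q lam0 hQ hlam0 N L hN hL τ₁ t₀ hτ₁ ht₀l (ρ t₀) (φ t₀)
    have hfstrict : f t₀ < Δ₁ ^ 2 := by
      have h1 : f t₀ ≤ (t₀/τ₁) ^ ((L:ℝ)/(N:ℝ)) * (δ^2 * τ₁ ^ (-(L:ℝ)/(N:ℝ))) :=
        hlow.trans (mul_le_mul_of_nonneg_left hWt₀
          (Real.rpow_nonneg (div_nonneg (hτ₁0.le.trans ht₀l) hτ₁0.le) _))
      have h2 : (t₀/τ₁) ^ ((L:ℝ)/(N:ℝ)) * (δ^2 * τ₁ ^ (-(L:ℝ)/(N:ℝ))) <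
          (Δ₁/δ)^2 * (δ^2 * τ₁ ^ (-(L:ℝ)/(N:ℝ))) :=
        mul_lt_mul_of_pos_right (hGstrict t₀ ht₀l hlt) (mul_pos (pow_pos hδ 2) hτrpos)
      have h3 : (Δ₁/δ)^2 * (δ^2 * τ₁ ^ (-(L:ℝ)/(N:ℝ))) = Δ₁^2 * τ₁ ^ (-(L:ℝ)/(N:ℝ)) := by
        field_simp
      have h4 : Δ₁^2 * τ₁ ^ (-(L:ℝ)/(N:ℝ)) ≤ Δ₁^2 := by nlinarith [sq_nonneg Δ₁]
      linarith
    have hct : ContinuousAt f t₀ := hfcont t₀ ht₀l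
    have hnb : f ⁻¹' (Set.Iio (Δ₁^2)) ∈ nhds t₀ := hct (Iio_mem_nhds hfstrict)
    obtain ⟨η, hη, hball⟩ := Metric.mem_nhds_iff.mp hnb
    set t' : ℝ := min (t₀ + η/2) τ with ht'
    have ht'gt : t₀ < t' := lt_min (by linarith) hlt
    have ht'S : t' ∈ S := by
      refine ⟨⟨ht₀l.trans ht'gt.le, min_le_right _ _⟩, fun s hs => ?_⟩
      rcases le_or_gt s t₀ with h | h
      · exact hreg₀ s ⟨hs.1, h⟩
      · have hd : dist s t₀ < η := by
          rw [Real.dist_eq, abs_of_pos (by linarith)]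
          have : s ≤ t₀ + η/2 := hs.2.trans (min_le_left _ _)
          linarith
        exact (hball (Metric.mem_ball.mpr hd)).le
    have := le_csSup hSbdd ht'S
    linarith
  have hregτ : ∀ s ∈ Set.Icc τ₁ τ, f s ≤ Δ₁ ^ 2 := ht₀τ ▸ hreg₀
  refine ⟨hregτ τ (Set.right_mem_Icc.mpr hτl), ?_⟩
  have hWτ := keyW τ hτl hregτ τ (Set.right_mem_Icc.mpr hτl)
  have hup := W0_div_le Q lam0 hQ hlam0 N L hN hL τ₁ τ hτ₁ hτl (ρ τ) (φ τ)
  have h1 : τ₁ ^ ((L:ℝ)/(N:ℝ)) * W0 Q lam0 N L (ρ τ) (φ τ) τ ≤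
      τ₁ ^ ((L:ℝ)/(N:ℝ)) * (δ^2 * τ₁ ^ (-(L:ℝ)/(N:ℝ))) :=
    mul_le_mul_of_nonneg_left hWτ (by positivity)
  have h2 : τ₁ ^ ((L:ℝ)/(N:ℝ)) * (δ^2 * τ₁ ^ (-(L:ℝ)/(N:ℝ))) = δ^2 := by
    rw [show -(L:ℝ)/(N:ℝ) = -((L:ℝ)/(N:ℝ)) by ring, Real.rpow_neg hτ₁0.le]
    field_simp
  linarith
end
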